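/- arXiv:2305.02406 — 4 statements merged into one kernel-verified Lean document; each statement's English description precedes it below -/
import Mathlib

section
/- Let G be a graph on n vertices and 1 ≤ k ≤ ⌊n/2⌋. Then every eigenvalue λ of the Laplacian L_k(G) of the k-th token graph satisfies λ ≤ k·λ_max(L(G)), where λ_max(L(G)) is the largest Laplacian eigenvalue of G. -/
open Finset Matrix

/-- The `k`-th token graph of a graph `G` on `[n]` = `Fin n`: vertices are the `k`-subsets of
`[n]`, and `A, B` are adjacent iff `|A ∩ B| = k - 1` and `A △ B` is an edge of `G`. -/
def tokenGraph (n k : ℕ) (G : SimpleGraph (Fin n)) :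
    SimpleGraph {s : Finset (Fin n) // s.card = k} :=
  SimpleGraph.fromRel (fun A B =>
    (A.1 ∩ B.1).card = k - 1 ∧ ∃ u v, G.Adj u v ∧ symmDiff A.1 B.1 = {u, v})

noncomputable instance (n k : ℕ) (G : SimpleGraph (Fin n)) :
    DecidableRel (tokenGraph n k G).Adj := Classical.decRel _

/-- Laplacian matrix of the `k`-th token graph. -/
noncomputable def lapTok (n k : ℕ) (G : SimpleGraph (Fin n)) :
    Matrix {s : Finset (Fin n) // s.card = k} {s : Finset (Fin n) // s.card = k} ℝ :=
  SimpleGraph.lapMatrix ℝ (tokenGraph n k G)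

/-- The largest eigenvalue of a (symmetric) real matrix. -/
noncomputable def lamMax {V : Type*} [Fintype V] (M : Matrix V V ℝ) : ℝ :=
  sSup {μ : ℝ | ∃ φ : V → ℝ, φ ≠ 0 ∧ M *ᵥ φ = μ • φ}

section Ray
variable {V : Type*} [Fintype V] [DecidableEq V] [Nonempty V]
  {M : Matrix V V ℝ}

lemma quad_le_sup (hM : M.IsHermitian) (x : V → ℝ) :
    x ⬝ᵥ (M *ᵥ x) ≤ (univ.sup' univ_nonempty hM.eigenvalues) * (x ⬝ᵥ x) := by
  set t := univ.sup' univ_nonempty hM.eigenvalues with ht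
  set U : Matrix V V ℝ := (hM.eigenvectorUnitary : Matrix V V ℝ) with hU
  set c : V → ℝ := star U *ᵥ x with hc
  have hxc : x = U *ᵥ c := by
    rw [hc, mulVec_mulVec, (Matrix.mem_unitaryGroup_iff).mp hM.eigenvectorUnitary.2, one_mulVec]
  have hMx : M *ᵥ x = U *ᵥ (diagonal hM.eigenvalues *ᵥ c) := by
    conv_lhs => rw [hM.spectral_theorem]
    simp [mulVec_mulVec, Matrix.mul_assoc, hc, hU]
  have hdot : ∀ y : V → ℝ, x ⬝ᵥ (U *ᵥ y) = c ⬝ᵥ y := by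
    intro y
    rw [dotProduct_mulVec, hc]
    congr 1
    rw [star_eq_conjTranspose, conjTranspose_eq_transpose_of_trivial, mulVec_transpose]
  have h1 : x ⬝ᵥ (M *ᵥ x) = ∑ i, hM.eigenvalues i * (c i)^2 := by
    rw [hMx, hdot, dotProduct]
    congr 1; ext i; simp [mulVec_diagonal]; ring
  have h2 : x ⬝ᵥ x = ∑ i, (c i)^2 := by
    nth_rewrite 2 [hxc]
    rw [hdot]
    simp [dotProduct, sq]
  rw [h1, h2, Finset.mul_sum]
  apply Finset.sum_le_sum
  intro i _
  have : hM.eigenvalues i ≤ t := Finset.le_sup' _ (mem_univ i)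
  nlinarith [sq_nonneg (c i)]

lemma rayleigh_le (hM : M.IsHermitian) (x : V → ℝ) :
    x ⬝ᵥ (M *ᵥ x) ≤ lamMax M * (x ⬝ᵥ x) := by
  set t := univ.sup' univ_nonempty hM.eigenvalues with ht
  have hmem : t ∈ {μ : ℝ | ∃ φ : V → ℝ, φ ≠ 0 ∧ M *ᵥ φ = μ • φ} := by
    obtain ⟨i, -, hi⟩ := Finset.exists_mem_eq_sup' (univ_nonempty) hM.eigenvalues
    refine ⟨⇑(hM.eigenvectorBasis i), ?_, ?_⟩
    · intro h
      exact hM.eigenvectorBasis.orthonormal.ne_zero i (by ext j; exact congrFun h j)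
    · rw [hM.mulVec_eigenvectorBasis, ← hi]
  have hbdd : BddAbove {μ : ℝ | ∃ φ : V → ℝ, φ ≠ 0 ∧ M *ᵥ φ = μ • φ} := by
    refine ⟨t, fun μ hμ => ?_⟩
    obtain ⟨ψ, hψ0, hψ⟩ := hμ
    have hq : ψ ⬝ᵥ (M *ᵥ ψ) = μ * (ψ ⬝ᵥ ψ) := by rw [hψ, dotProduct_smul]; rfl
    have hpos : 0 < ψ ⬝ᵥ ψ := by
      have := (Matrix.dotProduct_self_star_pos_iff (v := ψ)).mpr hψ0
      simpa using this
    have := quad_le_sup hM ψ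
    rw [hq] at this
    exact le_of_mul_le_mul_right (by linarith) hpos
  have hts : t ≤ lamMax M := le_csSup hbdd hmem
  calc x ⬝ᵥ (M *ᵥ x) ≤ t * (x ⬝ᵥ x) := quad_le_sup hM x
    _ ≤ lamMax M * (x ⬝ᵥ x) := by
        exact mul_le_mul_of_nonneg_right hts (by simpa using dotProduct_self_star_nonneg x)

end Ray

section Tok
variable {n k : ℕ} {G : SimpleGraph (Fin n)}

lemma insert_sdiff_insert'' {u v : Fin n} {S : Finset (Fin n)} (hu : u ∉ S) (huv : u ≠ v) :
    insert u S \ insert v S = {u} := by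
  ext x
  simp only [mem_sdiff, mem_insert, mem_singleton, not_or]
  constructor
  · rintro ⟨h1 | h1, h2, h3⟩
    · exact h1
    · exact absurd h1 h3
  · rintro rfl
    exact ⟨Or.inl rfl, huv, hu⟩

lemma insert_inter_insert' {u v : Fin n} {S : Finset (Fin n)} (hu : u ∉ S) (hv : v ∉ S)
    (huv : u ≠ v) : insert u S ∩ insert v S = S := by
  ext x
  simp only [mem_inter, mem_insert]
  constructor
  · rintro ⟨h1 | h1, h2 | h2⟩
    · exact absurd (h1.symm.trans h2) huv
    · exact absurd h2 (h1 ▸ hu)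
    · exact absurd h1 (h2 ▸ hv)
    · exact h1
  · exact fun h => ⟨Or.inr h, Or.inr h⟩

lemma tokenGraph_adj_iff (hk : 1 ≤ k) {A B : {s : Finset (Fin n) // s.card = k}} :
    (tokenGraph n k G).Adj A B ↔
      ∃ S u v, S.card = k - 1 ∧ u ∉ S ∧ v ∉ S ∧ G.Adj u v ∧
        A.1 = insert u S ∧ B.1 = insert v S := by
  constructor
  · intro h
    rw [tokenGraph, SimpleGraph.fromRel_adj] at h
    obtain ⟨hne, h | h⟩ := h
    all_goals {
      obtain ⟨hcard, u, v, huv, hsd⟩ := h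
      first
      | (have hcard' : (A.1 ∩ B.1).card = k - 1 := hcard)
      | (have hcard' : (A.1 ∩ B.1).card = k - 1 := by rwa [Finset.inter_comm])
      first
      | (have hsd' : symmDiff A.1 B.1 = {u, v} := hsd)
      | (have hsd' : symmDiff A.1 B.1 = {u, v} := by rwa [symmDiff_comm])
      have hsd2 : A.1 \ B.1 ∪ B.1 \ A.1 = {u, v} := by
        rw [← hsd']; rfl
      have hcA : (A.1 \ B.1).card = 1 := by
        have := Finset.card_inter_add_card_sdiff A.1 B.1
        rw [hcard', A.2] at this; omega
      have hcB : (B.1 \ A.1).card = 1 := by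
        have := Finset.card_inter_add_card_sdiff B.1 A.1
        rw [Finset.inter_comm, hcard', B.2] at this; omega
      obtain ⟨a, ha⟩ := Finset.card_eq_one.mp hcA
      obtain ⟨b, hb⟩ := Finset.card_eq_one.mp hcB
      have haA : a ∈ A.1 ∧ a ∉ B.1 := by
        have : a ∈ A.1 \ B.1 := ha ▸ Finset.mem_singleton_self a
        exact Finset.mem_sdiff.mp this
      have hbB : b ∈ B.1 ∧ b ∉ A.1 := by
        have : b ∈ B.1 \ A.1 := hb ▸ Finset.mem_singleton_self b
        exact Finset.mem_sdiff.mp this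
      have hab : a ≠ b := fun hh => hbB.2 (hh ▸ haA.1)
      have hauv : a = u ∨ a = v := by
        have : a ∈ ({u, v} : Finset (Fin n)) := by
          rw [← hsd2]; exact Finset.mem_union_left _ (ha ▸ Finset.mem_singleton_self a)
        simpa using this
      have hbuv : b = u ∨ b = v := by
        have : b ∈ ({u, v} : Finset (Fin n)) := by
          rw [← hsd2]; exact Finset.mem_union_right _ (hb ▸ Finset.mem_singleton_self b)
        simpa using this
      have hGab : G.Adj a b := by
        rcases hauv with rfl | rfl <;> rcases hbuv with rfl | rfl
        · exact absurd rfl hab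
        · exact huv
        · exact huv.symm
        · exact absurd rfl hab
      refine ⟨A.1 ∩ B.1, a, b, hcard', ?_, ?_, hGab, ?_, ?_⟩
      · exact fun hh => haA.2 (Finset.mem_inter.mp hh).2
      · exact fun hh => hbB.2 (Finset.mem_inter.mp hh).1
      · rw [Finset.insert_eq, Finset.union_comm, ← ha, ← Finset.sup_eq_union,
          ← Finset.inf_eq_inter, sup_inf_sdiff]
      · rw [Finset.insert_eq, Finset.union_comm, Finset.inter_comm, ← hb,
          ← Finset.sup_eq_union, ← Finset.inf_eq_inter, sup_inf_sdiff] }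
  · rintro ⟨S, u, v, hS, hu, hv, huv, hA, hB⟩
    have hne : u ≠ v := huv.ne
    rw [tokenGraph, SimpleGraph.fromRel_adj]
    constructor
    · intro hh
      apply (show u ∉ B.1 by rw [hB]; simp [hne, hu])
      rw [← congrArg Subtype.val hh, hA]; exact Finset.mem_insert_self u S
    · left
      refine ⟨by rw [hA, hB, insert_inter_insert' hu hv hne, hS], u, v, huv, ?_⟩
      rw [hA, hB]
      have h1 : insert u S \ insert v S = {u} := insert_sdiff_insert'' hu hne
      have h2 : insert v S \ insert u S = {v} := insert_sdiff_insert'' hv hne.symm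
      show (insert u S \ insert v S) ∪ (insert v S \ insert u S) = {u, v}
      rw [h1, h2]
      ext x; simp [Or.comm]

end Tok

open scoped Classical in
lemma key_ineq (n k : ℕ) (G : SimpleGraph (Fin n)) (hk : 1 ≤ k) (hn : 2 ≤ n)
    (φ : {s : Finset (Fin n) // s.card = k} → ℝ) :
    φ ⬝ᵥ (lapTok n k G *ᵥ φ) ≤ (k : ℝ) * lamMax (G.lapMatrix ℝ) * (φ ⬝ᵥ φ) := by
  haveI : Nonempty (Fin n) := ⟨⟨0, by omega⟩⟩
  set ψ : Finset (Fin n) → ℝ := fun s => if h : s.card = k then φ ⟨s, h⟩ else 0 with hψdef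
  have hψ : ∀ A : {s : Finset (Fin n) // s.card = k}, ψ A.1 = φ A := fun A => by
    rw [hψdef]; simp only [A.2, dif_pos]
  set x : Finset (Fin n) → Fin n → ℝ :=
    fun S w => if w ∈ S then 0 else ψ (insert w S) with hxdef
  set P : Finset (Finset (Fin n)) := univ.powersetCard (k-1) with hP
  set pick : Finset (Fin n) → Fin n := fun s => WithTop.untopD ⟨0, by omega⟩ s.min with hpickdef
  have hpick : ∀ a : Fin n, pick {a} = a := fun a => by
    rw [hpickdef]; simp [Finset.min_singleton]
  set lM := lamMax (G.lapMatrix ℝ) with hlM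
  -- Step A
  have hA : φ ⬝ᵥ (lapTok n k G *ᵥ φ) =
      (∑ A : {s : Finset (Fin n) // s.card = k}, ∑ B : {s : Finset (Fin n) // s.card = k}, if (tokenGraph n k G).Adj A B then (φ A - φ B)^2 else 0) / 2 := by
    rw [lapTok, ← Matrix.toLinearMap₂'_apply', SimpleGraph.lapMatrix_toLinearMap₂']
  -- master structure lemma for adjacent pairs
  have master : ∀ p : {s : Finset (Fin n) // s.card = k} × {s : Finset (Fin n) // s.card = k}, (tokenGraph n k G).Adj p.1 p.2 →
      (p.1.1 ∩ p.2.1).card = k - 1 ∧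
      pick (p.1.1 \ p.2.1) ∉ p.1.1 ∩ p.2.1 ∧ pick (p.2.1 \ p.1.1) ∉ p.1.1 ∩ p.2.1 ∧
      G.Adj (pick (p.1.1 \ p.2.1)) (pick (p.2.1 \ p.1.1)) ∧
      p.1.1 = insert (pick (p.1.1 \ p.2.1)) (p.1.1 ∩ p.2.1) ∧
      p.2.1 = insert (pick (p.2.1 \ p.1.1)) (p.1.1 ∩ p.2.1) := by
    intro p hp
    obtain ⟨S, u, v, hS, hu, hv, huv, h1, h2⟩ := (tokenGraph_adj_iff hk).mp hp
    have hne := huv.ne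
    have e1 : p.1.1 \ p.2.1 = {u} := by rw [h1, h2]; exact insert_sdiff_insert'' hu hne
    have e2 : p.2.1 \ p.1.1 = {v} := by rw [h1, h2]; exact insert_sdiff_insert'' hv hne.symm
    have e3 : p.1.1 ∩ p.2.1 = S := by rw [h1, h2]; exact insert_inter_insert' hu hv hne
    rw [e1, e2, e3, hpick, hpick]
    exact ⟨hS, hu, hv, huv, h1, h2⟩
  set t1 : Finset (Finset (Fin n) × Fin n × Fin n) :=
    (P ×ˢ (univ ×ˢ univ)).filter
      (fun q : Finset (Fin n) × Fin n × Fin n => q.2.1 ∉ q.1 ∧ q.2.2 ∉ q.1 ∧ G.Adj q.2.1 q.2.2)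
      with ht1
  have cardins : ∀ q : Finset (Fin n) × Fin n × Fin n, q ∈ t1 →
      (insert q.2.1 q.1).card = k ∧ (insert q.2.2 q.1).card = k := by
    intro q hq
    rw [ht1, Finset.mem_filter, Finset.mem_product] at hq
    obtain ⟨⟨hq1, -⟩, hu, hv, -⟩ := hq
    rw [hP, Finset.mem_powersetCard_univ] at hq1
    constructor
    · rw [Finset.card_insert_of_notMem hu, hq1]; omega
    · rw [Finset.card_insert_of_notMem hv, hq1]; omega
  -- Step B : bijection
  have hB : (∑ A : {s : Finset (Fin n) // s.card = k}, ∑ B : {s : Finset (Fin n) // s.card = k}, if (tokenGraph n k G).Adj A B then (φ A - φ B)^2 else 0)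
      = ∑ q ∈ t1, (ψ (insert q.2.1 q.1) - ψ (insert q.2.2 q.1))^2 := by
    rw [← Finset.sum_product' (s := (univ : Finset {s : Finset (Fin n) // s.card = k})) (t := (univ : Finset {s : Finset (Fin n) // s.card = k}))
      (f := fun A B => if (tokenGraph n k G).Adj A B then (φ A - φ B)^2 else 0)]
    rw [show ((univ : Finset {s : Finset (Fin n) // s.card = k}) ×ˢ (univ : Finset {s : Finset (Fin n) // s.card = k})) = univ from Finset.univ_product_univ]
    rw [← Finset.sum_filter]
    refine Finset.sum_bij'
      (i := fun p _ => (p.1.1 ∩ p.2.1, pick (p.1.1 \ p.2.1), pick (p.2.1 \ p.1.1)))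
      (j := fun q hq => (⟨insert q.2.1 q.1, (cardins q hq).1⟩, ⟨insert q.2.2 q.1, (cardins q hq).2⟩))
      ?_ ?_ ?_ ?_ ?_
    · intro p hp
      rw [Finset.mem_filter] at hp
      obtain ⟨hc, h2, h3, h4, h5, h6⟩ := master p hp.2
      rw [ht1, Finset.mem_filter, Finset.mem_product]
      exact ⟨⟨by rw [hP, Finset.mem_powersetCard_univ]; exact hc, by simp⟩, h2, h3, h4⟩
    · intro q hq
      rw [Finset.mem_filter]
      refine ⟨Finset.mem_univ _, ?_⟩
      rw [ht1, Finset.mem_filter, Finset.mem_product] at hq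
      obtain ⟨⟨hq1, -⟩, hu, hv, hadj⟩ := hq
      rw [hP, Finset.mem_powersetCard_univ] at hq1
      exact (tokenGraph_adj_iff hk).mpr ⟨q.1, q.2.1, q.2.2, hq1, hu, hv, hadj, rfl, rfl⟩
    · intro p hp
      rw [Finset.mem_filter] at hp
      obtain ⟨-, -, -, -, h5, h6⟩ := master p hp.2
      refine Prod.ext ?_ ?_
      · exact Subtype.ext h5.symm
      · exact Subtype.ext h6.symm
    · intro q hq
      rw [ht1, Finset.mem_filter, Finset.mem_product] at hq
      obtain ⟨-, hu, hv, hadj⟩ := hq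
      have hne := hadj.ne
      refine Prod.ext ?_ (Prod.ext ?_ ?_)
      · exact insert_inter_insert' hu hv hne
      · show pick (insert q.2.1 q.1 \ insert q.2.2 q.1) = q.2.1
        rw [insert_sdiff_insert'' hu hne, hpick]
      · show pick (insert q.2.2 q.1 \ insert q.2.1 q.1) = q.2.2
        rw [insert_sdiff_insert'' hv hne.symm, hpick]
    · intro p hp
      rw [Finset.mem_filter] at hp
      obtain ⟨-, -, -, -, h5, h6⟩ := master p hp.2
      show (φ p.1 - φ p.2)^2 = (ψ (insert _ _) - ψ (insert _ _))^2
      rw [← h5, ← h6, hψ, hψ]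
  -- Step C
  have hC : (∑ q ∈ t1, (ψ (insert q.2.1 q.1) - ψ (insert q.2.2 q.1))^2)
      ≤ ∑ S ∈ P, ∑ u, ∑ v, (if G.Adj u v then (x S u - x S v)^2 else 0) := by
    rw [ht1, Finset.sum_filter, Finset.sum_product]
    refine Finset.sum_le_sum fun S hS => ?_
    rw [show ((univ : Finset (Fin n)) ×ˢ (univ : Finset (Fin n))) = univ from
      Finset.univ_product_univ, Fintype.sum_prod_type]
    refine Finset.sum_le_sum fun u _ => Finset.sum_le_sum fun v _ => ?_
    by_cases h : u ∉ S ∧ v ∉ S ∧ G.Adj u v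
    · rw [if_pos h, if_pos h.2.2]
      apply le_of_eq
      rw [hxdef]
      simp only [h.1, h.2.1, if_neg, if_false]
    · rw [if_neg h]
      split_ifs
      · exact sq_nonneg _
      · exact le_refl 0
  -- Step D
  have hD : ∀ S : Finset (Fin n),
      (∑ u, ∑ v, (if G.Adj u v then (x S u - x S v)^2 else 0))
        ≤ 2 * (lM * (x S ⬝ᵥ x S)) := by
    intro S
    have h1 : x S ⬝ᵥ (G.lapMatrix ℝ *ᵥ x S)
        = (∑ u, ∑ v, (if G.Adj u v then (x S u - x S v)^2 else 0)) / 2 := by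
      rw [← Matrix.toLinearMap₂'_apply', SimpleGraph.lapMatrix_toLinearMap₂']
    have h2 := rayleigh_le (M := G.lapMatrix ℝ)
      (SimpleGraph.posSemidef_lapMatrix ℝ G).1 (x S)
    rw [h1] at h2
    rw [hlM]
    linarith
  -- Step E
  have hE : (∑ S ∈ P, (x S ⬝ᵥ x S)) = (k : ℝ) * (φ ⬝ᵥ φ) := by
    have e1 : ∀ S, x S ⬝ᵥ x S = ∑ u, (if u ∉ S then (ψ (insert u S))^2 else 0) := by
      intro S
      rw [dotProduct]
      refine Finset.sum_congr rfl fun u _ => ?_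
      by_cases h : u ∈ S <;> simp [hxdef, h, sq]
    simp_rw [e1]
    rw [← Finset.sum_product' (s := P) (t := (univ : Finset (Fin n)))
      (f := fun S u => if u ∉ S then (ψ (insert u S))^2 else 0)]
    rw [← Finset.sum_filter]
    have e2 : ∑ p ∈ (P ×ˢ (univ : Finset (Fin n))).filter (fun p => p.2 ∉ p.1),
        (ψ (insert p.2 p.1))^2
        = ∑ p ∈ ((univ.powersetCard k) ×ˢ (univ : Finset (Fin n))).filter
            (fun p : Finset (Fin n) × Fin n => p.2 ∈ p.1), (ψ p.1)^2 := by
      refine Finset.sum_nbij' (i := fun p => (insert p.2 p.1, p.2))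
        (j := fun p => (p.1.erase p.2, p.2)) ?_ ?_ ?_ ?_ ?_
      · intro p hp
        rw [Finset.mem_filter, Finset.mem_product] at hp ⊢
        obtain ⟨⟨h1, -⟩, h2⟩ := hp
        rw [hP, Finset.mem_powersetCard_univ] at h1
        refine ⟨⟨?_, Finset.mem_univ _⟩, Finset.mem_insert_self _ _⟩
        rw [Finset.mem_powersetCard_univ, Finset.card_insert_of_notMem h2, h1]
        omega
      · intro p hp
        rw [Finset.mem_filter, Finset.mem_product] at hp ⊢
        obtain ⟨⟨h1, -⟩, h2⟩ := hp
        rw [Finset.mem_powersetCard_univ] at h1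
        refine ⟨⟨?_, Finset.mem_univ _⟩, Finset.notMem_erase _ _⟩
        rw [hP, Finset.mem_powersetCard_univ, Finset.card_erase_of_mem h2, h1]
      · intro p hp
        rw [Finset.mem_filter] at hp
        exact Prod.ext (by simp [Finset.erase_insert hp.2]) rfl
      · intro p hp
        rw [Finset.mem_filter] at hp
        exact Prod.ext (by simp [Finset.insert_erase hp.2]) rfl
      · intro p _; rfl
    rw [e2, Finset.sum_filter, Finset.sum_product]
    have e3 : ∀ A ∈ univ.powersetCard k,
        (∑ u, if u ∈ A then (ψ A)^2 else 0) = (k : ℝ) * (ψ A)^2 := by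
      intro A hA
      rw [Finset.mem_powersetCard_univ] at hA
      rw [Finset.sum_ite_mem, Finset.univ_inter, Finset.sum_const, hA, nsmul_eq_mul]
    rw [Finset.sum_congr rfl e3, ← Finset.mul_sum]
    congr 1
    rw [Finset.sum_subtype (univ.powersetCard k)
      (fun s => Finset.mem_powersetCard_univ) (fun s => (ψ s)^2)]
    rw [dotProduct]
    refine Finset.sum_congr rfl fun A _ => ?_
    rw [hψ A, sq]
  -- combine
  have hsum : (∑ S ∈ P, ∑ u, ∑ v, (if G.Adj u v then (x S u - x S v)^2 else 0))
      ≤ 2 * (lM * ((k : ℝ) * (φ ⬝ᵥ φ))) := by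
    calc _ ≤ ∑ S ∈ P, 2 * (lM * (x S ⬝ᵥ x S)) := Finset.sum_le_sum fun S _ => hD S
      _ = 2 * (lM * ∑ S ∈ P, (x S ⬝ᵥ x S)) := by rw [Finset.mul_sum]; simp_rw [Finset.mul_sum]
      _ = 2 * (lM * ((k : ℝ) * (φ ⬝ᵥ φ))) := by rw [hE]
  rw [hA, hB]
  have := le_trans hC hsum
  linarith

open scoped Classical in
/-- For `1 ≤ k ≤ ⌊n/2⌋`, every eigenvalue `λ` of `L_k(G)` satisfies
`λ ≤ k λ_max(L(G))`. -/
theorem token_eigenvalue_upper (n k : ℕ) (G : SimpleGraph (Fin n)) (hk : 1 ≤ k)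
    (hkn : k ≤ n / 2) (lam : ℝ) (φ : {s : Finset (Fin n) // s.card = k} → ℝ) (hφ0 : φ ≠ 0)
    (hφ : lapTok n k G *ᵥ φ = lam • φ) :
    lam ≤ (k : ℝ) * lamMax (G.lapMatrix ℝ) := by
  have hn : 2 ≤ n := by omega
  have h1 : φ ⬝ᵥ (lapTok n k G *ᵥ φ) = lam * (φ ⬝ᵥ φ) := by
    rw [hφ, dotProduct_smul]; rfl
  have h2 := key_ineq n k G hk hn φ
  have hpos : 0 < φ ⬝ᵥ φ := by
    have := (Matrix.dotProduct_self_star_pos_iff (v := φ)).mpr hφ0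
    simpa using this
  rw [h1] at h2
  exact le_of_mul_le_mul_right h2 hpos
end

section
/- Let 1 ≤ k ≤ ⌊n/2⌋ and let φ ∈ ℝ^{C(n,k)} be nonzero with B_{n,k,k−1}ᵀ φ = 0. Then φ is an eigenvector of the Laplacian of the Johnson graph F_k(K_n) with eigenvalue k(n − k + 1). -/
open Finset Matrix

/-- The inclusion matrix `B_{n,k,l}` of `l`-subsets into `k`-subsets of `[n]`. -/
def inclMatrix (n k l : ℕ) :
    Matrix {s : Finset (Fin n) // s.card = k} {s : Finset (Fin n) // s.card = l} ℝ :=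
  fun σ η => if η.1 ⊆ σ.1 then 1 else 0

/-- Cardinality of the difference of two `k`-sets intersecting in `k-1` elements. -/
lemma card_sdiff_one {α : Type*} [DecidableEq α] {k : ℕ} (hk : 1 ≤ k)
    {s t : Finset α} (hs : s.card = k) (hst : (s ∩ t).card = k - 1) :
    (s \ t).card = 1 := by
  have := Finset.card_sdiff_add_card_inter s t
  omega

lemma swap_card {α : Type*} [DecidableEq α] {k : ℕ} (hk : 1 ≤ k)
    {σ : Finset α} (hσ : σ.card = k) {a b : α} (ha : a ∈ σ) (hb : b ∉ σ) :
    (insert b (σ.erase a)).card = k := by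
  have hbe : b ∉ σ.erase a := fun h => hb (Finset.mem_of_mem_erase h)
  rw [Finset.card_insert_of_notMem hbe, Finset.card_erase_of_mem ha, hσ]
  omega

lemma swap_sdiff₁ {α : Type*} [DecidableEq α] {σ : Finset α} {a b : α}
    (ha : a ∈ σ) (hb : b ∉ σ) : σ \ insert b (σ.erase a) = {a} := by
  ext x
  simp only [Finset.mem_sdiff, Finset.mem_insert, Finset.mem_erase, Finset.mem_singleton]
  constructor
  · rintro ⟨hx, hx2⟩
    by_contra hne
    exact hx2 (Or.inr ⟨hne, hx⟩)
  · rintro rfl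
    refine ⟨ha, ?_⟩
    rintro (h | h)
    · exact hb (h ▸ ha)
    · exact h.1 rfl

lemma swap_sdiff₂ {α : Type*} [DecidableEq α] {σ : Finset α} {a b : α}
    (ha : a ∈ σ) (hb : b ∉ σ) : insert b (σ.erase a) \ σ = {b} := by
  ext x
  simp only [Finset.mem_sdiff, Finset.mem_insert, Finset.mem_erase, Finset.mem_singleton]
  constructor
  · rintro ⟨hx | hx, hx2⟩
    · exact hx
    · exact absurd hx.2 hx2
  · rintro rfl
    exact ⟨Or.inl rfl, hb⟩

/-- Reconstructing a neighbour from its difference singletons. -/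
lemma swap_eq {α : Type*} [DecidableEq α] {σ τ : Finset α} {a b : α}
    (ha : σ \ τ = {a}) (hb : τ \ σ = {b}) : insert b (σ.erase a) = τ := by
  have haσ : a ∈ σ := by
    have : a ∈ σ \ τ := ha ▸ Finset.mem_singleton_self a
    exact (Finset.mem_sdiff.mp this).1
  have herase : σ.erase a = σ ∩ τ := by
    rw [Finset.erase_eq, ← ha, Finset.sdiff_sdiff_self_left]
  rw [herase, Finset.insert_eq, ← hb, Finset.inter_comm, Finset.sdiff_union_inter]

/-- Adjacency in the Johnson graph. -/
lemma tokenGraph_top_adj {n k : ℕ} (hk : 1 ≤ k) (σ τ : {s : Finset (Fin n) // s.card = k}) :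
    (tokenGraph n k ⊤).Adj σ τ ↔ τ ≠ σ ∧ (σ.1 ∩ τ.1).card = k - 1 := by
  rw [tokenGraph, SimpleGraph.fromRel_adj]
  constructor
  · rintro ⟨hne, h | h⟩
    · exact ⟨Ne.symm hne, h.1⟩
    · exact ⟨Ne.symm hne, by rw [Finset.inter_comm]; exact h.1⟩
  · rintro ⟨hne, hcard⟩
    refine ⟨Ne.symm hne, Or.inl ⟨hcard, ?_⟩⟩
    have h1 : (σ.1 \ τ.1).card = 1 := card_sdiff_one hk σ.2 hcard
    have h2 : (τ.1 \ σ.1).card = 1 := by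
      refine card_sdiff_one hk τ.2 ?_
      rwa [Finset.inter_comm]
    have hsd : (symmDiff σ.1 τ.1).card = 2 := by
      rw [symmDiff_def]
      have hd : Disjoint (σ.1 \ τ.1) (τ.1 \ σ.1) := disjoint_sdiff_sdiff
      rw [Finset.sup_eq_union, Finset.card_union_of_disjoint hd, h1, h2]
    obtain ⟨u, v, huv, hst⟩ := Finset.card_eq_two.mp hsd
    exact ⟨u, v, by simp [huv], hst⟩

/-- The counting identity for products of inclusion indicators. -/
lemma count_incl {n k : ℕ} (hk : 1 ≤ k) (σ τ : {s : Finset (Fin n) // s.card = k}) :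
    (∑ η : {s : Finset (Fin n) // s.card = k - 1},
        if η.1 ⊆ σ.1 ∧ η.1 ⊆ τ.1 then (1 : ℝ) else 0)
      = if τ = σ then (k : ℝ) else if (σ.1 ∩ τ.1).card = k - 1 then 1 else 0 := by
  classical
  have hcnt : (Finset.univ.filter
      (fun η : {s : Finset (Fin n) // s.card = k - 1} => η.1 ⊆ σ.1 ∩ τ.1)).card
      = ((σ.1 ∩ τ.1).card).choose (k - 1) := by
    rw [← Finset.card_powersetCard]
    refine Finset.card_bij (fun η _ => η.1) ?_ ?_ ?_
    · intro η hη
      rw [Finset.mem_powersetCard]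
      exact ⟨(Finset.mem_filter.mp hη).2, η.2⟩
    · intro a ha b hb hab
      exact Subtype.ext hab
    · intro A hA
      rw [Finset.mem_powersetCard] at hA
      exact ⟨⟨A, hA.2⟩, Finset.mem_filter.mpr ⟨Finset.mem_univ _, hA.1⟩, rfl⟩
  have hsum : (∑ η : {s : Finset (Fin n) // s.card = k - 1},
      if η.1 ⊆ σ.1 ∧ η.1 ⊆ τ.1 then (1 : ℝ) else 0)
      = (((σ.1 ∩ τ.1).card).choose (k - 1) : ℝ) := by
    rw [Finset.sum_boole, ← hcnt]
    congr 1
    exact congrArg Finset.card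
      (Finset.filter_congr fun η _ => by simp [Finset.subset_inter_iff])
  rw [hsum]
  by_cases hτσ : τ = σ
  · subst hτσ
    rw [Finset.inter_self, τ.2, if_pos rfl, Nat.choose_symm hk, Nat.choose_one_right]
  · rw [if_neg hτσ]
    have hle : (σ.1 ∩ τ.1).card < k := by
      rcases lt_or_eq_of_le (le_trans (Finset.card_le_card (Finset.inter_subset_left))
        (le_of_eq σ.2)) with h | h
      · exact h
      · exfalso
        have h1 : σ.1 ∩ τ.1 = σ.1 :=
          Finset.eq_of_subset_of_card_le Finset.inter_subset_left (by rw [h, σ.2])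
        have h2 : σ.1 ⊆ τ.1 := by rw [← h1]; exact Finset.inter_subset_right
        have : σ.1 = τ.1 := Finset.eq_of_subset_of_card_le h2 (by rw [σ.2, τ.2])
        exact hτσ (Subtype.ext this.symm)
    by_cases hc : (σ.1 ∩ τ.1).card = k - 1
    · rw [if_pos hc, hc, Nat.choose_self, Nat.cast_one]
    · rw [if_neg hc, Nat.choose_eq_zero_of_lt (by omega), Nat.cast_zero]

/-- The degree of any vertex of the Johnson graph is `k(n-k)`. -/
lemma johnson_degree {n k : ℕ} (hk : 1 ≤ k) (hkn : k ≤ n)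
    (σ : {s : Finset (Fin n) // s.card = k}) :
    (tokenGraph n k ⊤).degree σ = k * (n - k) := by
  classical
  rw [← SimpleGraph.card_neighborFinset_eq_degree]
  have hnb : (tokenGraph n k ⊤).neighborFinset σ
      = Finset.univ.filter (fun τ => τ ≠ σ ∧ (σ.1 ∩ τ.1).card = k - 1) := by
    ext τ
    simp only [SimpleGraph.mem_neighborFinset, Finset.mem_filter, Finset.mem_univ, true_and]
    exact tokenGraph_top_adj hk σ τ
  have hcard : (σ.1 ×ˢ σ.1ᶜ).card = k * (n - k) := by
    rw [Finset.card_product, σ.2, Finset.card_compl, σ.2, Fintype.card_fin]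
  rw [hnb, ← hcard]
  refine (Finset.card_bij
    (fun p hp => (⟨insert p.2 (σ.1.erase p.1),
      swap_card hk σ.2 (Finset.mem_product.mp hp).1
        (Finset.mem_compl.mp (Finset.mem_product.mp hp).2)⟩ :
      {s : Finset (Fin n) // s.card = k})) ?_ ?_ ?_).symm
  · -- maps into the filter
    intro p hp
    obtain ⟨ha, hb⟩ := Finset.mem_product.mp hp
    rw [Finset.mem_compl] at hb
    rw [Finset.mem_filter]
    refine ⟨Finset.mem_univ _, ?_, ?_⟩
    · intro h
      have : p.2 ∈ σ.1 := by
        have := congrArg Subtype.val h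
        simp only at this
        rw [← this]
        exact Finset.mem_insert_self _ _
      exact hb this
    · have hint : σ.1 ∩ insert p.2 (σ.1.erase p.1) = σ.1.erase p.1 := by
        rw [Finset.inter_comm, Finset.insert_inter_of_notMem hb,
          Finset.inter_eq_left.mpr (Finset.erase_subset _ _)]
      simp only [hint]
      rw [Finset.card_erase_of_mem ha, σ.2]
  · -- injectivity
    intro p hp q hq heq
    obtain ⟨hpa, hpb⟩ := Finset.mem_product.mp hp
    obtain ⟨hqa, hqb⟩ := Finset.mem_product.mp hq
    rw [Finset.mem_compl] at hpb hqb
    have hval : insert p.2 (σ.1.erase p.1) = insert q.2 (σ.1.erase q.1) :=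
      congrArg Subtype.val heq
    have h1 : ({p.1} : Finset (Fin n)) = {q.1} := by
      rw [← swap_sdiff₁ hpa hpb, ← swap_sdiff₁ hqa hqb, hval]
    have h2 : ({p.2} : Finset (Fin n)) = {q.2} := by
      rw [← swap_sdiff₂ hpa hpb, ← swap_sdiff₂ hqa hqb, hval]
    have e1 : p.1 = q.1 := Finset.singleton_injective h1
    have e2 : p.2 = q.2 := Finset.singleton_injective h2
    exact Prod.ext e1 e2
  · -- surjectivity
    intro τ hτ
    rw [Finset.mem_filter] at hτ
    obtain ⟨-, hne, hcap⟩ := hτ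
    have hc1 : (σ.1 \ τ.1).card = 1 := card_sdiff_one hk σ.2 hcap
    have hc2 : (τ.1 \ σ.1).card = 1 := card_sdiff_one hk τ.2
      (by rw [Finset.inter_comm]; exact hcap)
    obtain ⟨a, ha⟩ := Finset.card_eq_one.mp hc1
    obtain ⟨b, hb⟩ := Finset.card_eq_one.mp hc2
    have haσ : a ∈ σ.1 := by
      have : a ∈ σ.1 \ τ.1 := ha ▸ Finset.mem_singleton_self a
      exact (Finset.mem_sdiff.mp this).1
    have hbσ : b ∉ σ.1 := by
      have : b ∈ τ.1 \ σ.1 := hb ▸ Finset.mem_singleton_self b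
      exact (Finset.mem_sdiff.mp this).2
    refine ⟨(a, b), Finset.mem_product.mpr ⟨haσ, Finset.mem_compl.mpr hbσ⟩, ?_⟩
    exact Subtype.ext (swap_eq ha hb)

/-- A nonzero `φ` with `B_{n,k,k-1}ᵀ φ = 0` is an eigenvector of the Laplacian of the Johnson
graph `F_k(K_n)` with eigenvalue `k(n - k + 1)`. -/
theorem johnson_top_eigenvector (n k : ℕ) (hk : 1 ≤ k) (hkn : k ≤ n / 2)
    (φ : {s : Finset (Fin n) // s.card = k} → ℝ) (hφ0 : φ ≠ 0)
    (hker : (inclMatrix n k (k - 1))ᵀ *ᵥ φ = 0) :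
    lapTok n k ⊤ *ᵥ φ = ((k : ℝ) * ((n : ℝ) - (k : ℝ) + 1)) • φ := by
  classical
  have hkn' : k ≤ n := by omega
  funext σ
  rw [lapTok, SimpleGraph.lapMatrix_mulVec_apply, Pi.smul_apply, smul_eq_mul]
  -- kernel condition pointwise
  have H : ∀ η : {s : Finset (Fin n) // s.card = k - 1},
      (∑ τ, (if η.1 ⊆ τ.1 then (1 : ℝ) else 0) * φ τ) = 0 := by
    intro η
    have := congrFun hker η
    simpa [Matrix.mulVec, dotProduct, inclMatrix, Matrix.transpose_apply] using this
  -- the key identity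
  have key : (∑ τ, (if τ = σ then (k : ℝ)
      else if (σ.1 ∩ τ.1).card = k - 1 then 1 else 0) * φ τ) = 0 := by
    have step1 : (∑ τ, (if τ = σ then (k : ℝ)
        else if (σ.1 ∩ τ.1).card = k - 1 then 1 else 0) * φ τ)
        = ∑ τ, (∑ η : {s : Finset (Fin n) // s.card = k - 1},
            if η.1 ⊆ σ.1 ∧ η.1 ⊆ τ.1 then (1 : ℝ) else 0) * φ τ := by
      refine Finset.sum_congr rfl fun τ _ => ?_
      rw [count_incl hk σ τ]
    rw [step1]
    have step2 : ∀ τ : {s : Finset (Fin n) // s.card = k},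
        (∑ η : {s : Finset (Fin n) // s.card = k - 1},
        if η.1 ⊆ σ.1 ∧ η.1 ⊆ τ.1 then (1 : ℝ) else 0) * φ τ
        = ∑ η : {s : Finset (Fin n) // s.card = k - 1},
          (if η.1 ⊆ σ.1 then (1 : ℝ) else 0) * ((if η.1 ⊆ τ.1 then (1 : ℝ) else 0) * φ τ) := by
      intro τ
      rw [Finset.sum_mul]
      refine Finset.sum_congr rfl fun η _ => ?_
      by_cases h1 : η.1 ⊆ σ.1 <;> by_cases h2 : η.1 ⊆ τ.1 <;> simp [h1, h2]
    simp_rw [step2]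
    rw [Finset.sum_comm]
    refine Finset.sum_eq_zero fun η _ => ?_
    rw [← Finset.mul_sum, H η, mul_zero]
  -- split off the `τ = σ` term
  have hsplit : (k : ℝ) * φ σ + (∑ τ ∈ (tokenGraph n k ⊤).neighborFinset σ, φ τ) = 0 := by
    rw [← Finset.add_sum_erase Finset.univ _ (Finset.mem_univ σ)] at key
    have h1 : (if σ = σ then (k : ℝ) else if (σ.1 ∩ σ.1).card = k - 1 then 1 else 0) * φ σ
        = (k : ℝ) * φ σ := by simp
    rw [h1] at key
    have h2 : (∑ τ ∈ Finset.univ.erase σ,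
        (if τ = σ then (k : ℝ) else if (σ.1 ∩ τ.1).card = k - 1 then 1 else 0) * φ τ)
        = ∑ τ ∈ (tokenGraph n k ⊤).neighborFinset σ, φ τ := by
      rw [SimpleGraph.neighborFinset_eq_filter]
      have hset : Finset.univ.filter (fun τ => (tokenGraph n k ⊤).Adj σ τ)
          = (Finset.univ.erase σ).filter (fun τ => (σ.1 ∩ τ.1).card = k - 1) := by
        ext τ
        simp only [Finset.mem_filter, Finset.mem_erase, Finset.mem_univ, true_and, and_true]
        rw [tokenGraph_top_adj hk σ τ]
      rw [hset, Finset.sum_filter]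
      refine Finset.sum_congr rfl fun τ hτ => ?_
      have hne : τ ≠ σ := (Finset.mem_erase.mp hτ).1
      rw [if_neg hne]
      by_cases hc : (σ.1 ∩ τ.1).card = k - 1 <;> simp [hc]
    rw [h2] at key
    exact key
  rw [johnson_degree hk hkn' σ]
  have hnsum : (∑ τ ∈ (tokenGraph n k ⊤).neighborFinset σ, φ τ) = -((k : ℝ) * φ σ) := by
    linarith [hsplit]
  rw [hnsum]
  have hcast : ((k * (n - k) : ℕ) : ℝ) = (k : ℝ) * ((n : ℝ) - (k : ℝ)) := by
    push_cast [Nat.cast_sub hkn']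
    ring
  rw [hcast]
  ring
end

section
/- Let G be a graph on [n] with complement Ḡ, and 1 ≤ k ≤ ⌊n/2⌋. If φ ∈ ℝ^{C(n,k)} satisfies B_{n,k,k−1}ᵀ φ = 0 and is an eigenvector of L_k(G) with eigenvalue λ, then φ is an eigenvector of L_k(Ḡ) with eigenvalue k(n − k + 1) − λ. -/
open Finset Matrix

section Aux

variable {n k : ℕ}

private lemma tokenAdj_iff (H : SimpleGraph (Fin n))
    (σ τ : {s : Finset (Fin n) // s.card = k}) :
    (tokenGraph n k H).Adj σ τ ↔ σ ≠ τ ∧ (σ.1 ∩ τ.1).card = k - 1 ∧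
      ∃ u v, H.Adj u v ∧ symmDiff σ.1 τ.1 = {u, v} := by
  unfold tokenGraph
  rw [SimpleGraph.fromRel_adj]
  constructor
  · rintro ⟨hne, ⟨hc, u, v, huv, hsd⟩ | ⟨hc, u, v, huv, hsd⟩⟩
    · exact ⟨hne, hc, u, v, huv, hsd⟩
    · exact ⟨hne, by rwa [Finset.inter_comm], u, v, huv, by rwa [symmDiff_comm]⟩
  · rintro ⟨hne, hc, hx⟩
    exact ⟨hne, Or.inl ⟨hc, hx⟩⟩

private lemma card_symmDiff_eq (σ τ : {s : Finset (Fin n) // s.card = k}) :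
    (symmDiff σ.1 τ.1).card + 2 * (σ.1 ∩ τ.1).card = 2 * k := by
  have h1 : (σ.1 ∩ τ.1).card + (σ.1 ∪ τ.1).card = k + k := by
    rw [Finset.card_inter_add_card_union, σ.2, τ.2]
  have h2 : ((σ.1 ∪ τ.1) \ (σ.1 ∩ τ.1)).card + (σ.1 ∩ τ.1).card = (σ.1 ∪ τ.1).card :=
    Finset.card_sdiff_add_card_eq_card (Finset.inter_subset_union)
  have h3 := symmDiff_eq_sup_sdiff_inf (a := σ.1) (b := τ.1)
  rw [Finset.sup_eq_union, Finset.inf_eq_inter] at h3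
  rw [h3]
  omega

private lemma tokenTopAdj_iff (hk : 1 ≤ k) (σ τ : {s : Finset (Fin n) // s.card = k}) :
    (tokenGraph n k ⊤).Adj σ τ ↔ σ ≠ τ ∧ (σ.1 ∩ τ.1).card = k - 1 := by
  rw [tokenAdj_iff]
  refine ⟨fun h => ⟨h.1, h.2.1⟩, fun h => ⟨h.1, h.2, ?_⟩⟩
  have hcd := card_symmDiff_eq σ τ
  have h2 : (symmDiff σ.1 τ.1).card = 2 := by
    have := h.2
    omega
  obtain ⟨u, v, huv, he⟩ := Finset.card_eq_two.1 h2
  exact ⟨u, v, by simpa using huv, he⟩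

private lemma tokenAdj_top_iff (G : SimpleGraph (Fin n))
    (σ τ : {s : Finset (Fin n) // s.card = k}) :
    (tokenGraph n k ⊤).Adj σ τ ↔
      (tokenGraph n k G).Adj σ τ ∨ (tokenGraph n k Gᶜ).Adj σ τ := by
  simp only [tokenAdj_iff]
  constructor
  · rintro ⟨hne, hc, u, v, huv, hsd⟩
    have hne' : u ≠ v := by simpa using huv
    by_cases hG : G.Adj u v
    · exact Or.inl ⟨hne, hc, u, v, hG, hsd⟩
    · exact Or.inr ⟨hne, hc, u, v, (SimpleGraph.compl_adj _ _ _).2 ⟨hne', hG⟩, hsd⟩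
  · rintro (⟨hne, hc, u, v, huv, hsd⟩ | ⟨hne, hc, u, v, huv, hsd⟩)
    · exact ⟨hne, hc, u, v, by simp [huv.ne], hsd⟩
    · exact ⟨hne, hc, u, v, by simp [huv.ne], hsd⟩

private lemma tokenAdj_not_both (G : SimpleGraph (Fin n))
    (σ τ : {s : Finset (Fin n) // s.card = k})
    (h1 : (tokenGraph n k G).Adj σ τ) : ¬ (tokenGraph n k Gᶜ).Adj σ τ := by
  rw [tokenAdj_iff] at h1 ⊢
  obtain ⟨-, -, u, v, huv, hsd⟩ := h1
  rintro ⟨-, -, u', v', huv', hsd'⟩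
  have hpair : ({u, v} : Finset (Fin n)) = {u', v'} := by rw [← hsd, ← hsd']
  have hu' : u' ∈ ({u, v} : Finset (Fin n)) := by rw [hpair]; simp
  have hv' : v' ∈ ({u, v} : Finset (Fin n)) := by rw [hpair]; simp
  have hne' : u' ≠ v' := huv'.ne
  simp only [Finset.mem_insert, Finset.mem_singleton] at hu' hv'
  have hadj : G.Adj u' v' := by
    rcases hu' with rfl | rfl <;> rcases hv' with rfl | rfl
    · exact absurd rfl hne'
    · exact huv
    · exact huv.symm
    · exact absurd rfl hne'
  exact ((SimpleGraph.compl_adj _ _ _).1 huv').2 hadj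

private lemma ite_adj_add (G : SimpleGraph (Fin n)) (σ τ : {s : Finset (Fin n) // s.card = k}) :
    (if (tokenGraph n k G).Adj σ τ then (1:ℝ) else 0) +
      (if (tokenGraph n k Gᶜ).Adj σ τ then (1:ℝ) else 0) =
    (if (tokenGraph n k ⊤).Adj σ τ then (1:ℝ) else 0) := by
  by_cases h1 : (tokenGraph n k G).Adj σ τ
  · rw [if_pos h1, if_neg (tokenAdj_not_both G σ τ h1),
      if_pos ((tokenAdj_top_iff G σ τ).2 (Or.inl h1))]
    ring
  · by_cases h2 : (tokenGraph n k Gᶜ).Adj σ τ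
    · rw [if_neg h1, if_pos h2, if_pos ((tokenAdj_top_iff G σ τ).2 (Or.inr h2))]
      ring
    · have h3 : ¬ (tokenGraph n k ⊤).Adj σ τ :=
        fun h => ((tokenAdj_top_iff G σ τ).1 h).elim h1 h2
      rw [if_neg h1, if_neg h2, if_neg h3]
      ring

private lemma lapTok_add (G : SimpleGraph (Fin n)) :
    lapTok n k G + lapTok n k Gᶜ = lapTok n k ⊤ := by
  ext σ τ
  simp only [lapTok, SimpleGraph.lapMatrix, Matrix.add_apply, Matrix.sub_apply,
    SimpleGraph.degMatrix, Matrix.diagonal_apply, SimpleGraph.adjMatrix_apply]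
  by_cases hst : σ = τ
  · subst hst
    rw [if_pos rfl, if_pos rfl, if_pos rfl,
      SimpleGraph.degree_eq_sum_if_adj, SimpleGraph.degree_eq_sum_if_adj,
      SimpleGraph.degree_eq_sum_if_adj]
    simp only [if_neg ((tokenGraph n k G).irrefl (v := σ)),
      if_neg ((tokenGraph n k Gᶜ).irrefl (v := σ)),
      if_neg ((tokenGraph n k ⊤).irrefl (v := σ)), sub_zero]
    rw [← Finset.sum_add_distrib]
    exact Finset.sum_congr rfl fun τ _ => ite_adj_add G σ τ
  · rw [if_neg hst, if_neg hst, if_neg hst]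
    have := ite_adj_add G σ τ
    linarith

private lemma choose_pred (hk : 1 ≤ k) : k.choose (k - 1) = k := by
  have hk1 : k - 1 + 1 = k := by omega
  have h2 : k.choose (k - 1) = (k - 1 + 1).choose (k - 1) := by rw [hk1]
  rw [h2, Nat.choose_succ_self_right, hk1]

private lemma sum_incl (s : Finset (Fin n)) :
    ∑ η : {t : Finset (Fin n) // t.card = k - 1}, (if η.1 ⊆ s then (1:ℝ) else 0)
      = (s.card.choose (k - 1) : ℝ) := by
  rw [Finset.sum_boole]
  norm_cast
  rw [← Finset.card_powersetCard (k - 1) s]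
  apply Finset.card_bij (fun η _ => η.1)
  · intro η hη
    simp only [Finset.mem_filter, Finset.mem_univ, true_and] at hη
    exact Finset.mem_powersetCard.2 ⟨hη, η.2⟩
  · intro η₁ _ η₂ _ h
    exact Subtype.ext h
  · intro t ht
    obtain ⟨hts, htc⟩ := Finset.mem_powersetCard.1 ht
    exact ⟨⟨t, htc⟩, by simp [hts], rfl⟩

private lemma card_supersets (hk : 1 ≤ k) (hkn : k ≤ n) (η : Finset (Fin n))
    (hη : η.card = k - 1) :
    ∑ τ : {s : Finset (Fin n) // s.card = k}, (if η ⊆ τ.1 then (1:ℝ) else 0)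
      = (n : ℝ) - k + 1 := by
  rw [Finset.sum_boole]
  have hcard : (Finset.univ.filter (fun τ : {s : Finset (Fin n) // s.card = k} => η ⊆ τ.1)).card
      = n - (k - 1) := by
    have hc : (ηᶜ : Finset (Fin n)).card = n - (k - 1) := by
      rw [Finset.card_compl, Fintype.card_fin, hη]
    rw [← hc]
    symm
    apply Finset.card_bij (fun y hy => (⟨insert y η, by
      rw [Finset.card_insert_of_notMem (Finset.mem_compl.1 hy), hη]; omega⟩ :
        {s : Finset (Fin n) // s.card = k}))
    · intro y hy
      simp only [Finset.mem_filter, Finset.mem_univ, true_and]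
      exact Finset.subset_insert _ _
    · intro y₁ hy₁ y₂ hy₂ h
      have h' : insert y₁ η = insert y₂ η := congrArg Subtype.val h
      have hmem : y₁ ∈ insert y₂ η := h' ▸ Finset.mem_insert_self y₁ η
      rcases Finset.mem_insert.1 hmem with h2 | h2
      · exact h2
      · exact absurd h2 (Finset.mem_compl.1 hy₁)
    · intro τ hτ
      simp only [Finset.mem_filter, Finset.mem_univ, true_and] at hτ
      have hd : (τ.1 \ η).card = 1 := by
        rw [Finset.card_sdiff_of_subset hτ, τ.2, hη]; omega
      obtain ⟨y, hy⟩ := Finset.card_eq_one.1 hd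
      have hyτ : y ∈ τ.1 \ η := hy ▸ Finset.mem_singleton_self y
      have hyη : y ∉ η := (Finset.mem_sdiff.1 hyτ).2
      refine ⟨y, Finset.mem_compl.2 hyη, ?_⟩
      apply Subtype.ext
      show insert y η = τ.1
      apply Finset.eq_of_subset_of_card_le
      · exact Finset.insert_subset (Finset.mem_sdiff.1 hyτ).1 hτ
      · rw [τ.2, Finset.card_insert_of_notMem hyη, hη]; omega
  rw [hcard, Nat.cast_sub (by omega), Nat.cast_sub hk, Nat.cast_one]
  ring

private lemma claimC (hk : 1 ≤ k) (σ τ : {s : Finset (Fin n) // s.card = k}) :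
    ∑ η : {t : Finset (Fin n) // t.card = k - 1},
      (if η.1 ⊆ σ.1 then (1:ℝ) else 0) * (if η.1 ⊆ τ.1 then (1:ℝ) else 0)
      = (if (tokenGraph n k ⊤).Adj σ τ then (1:ℝ) else 0)
        + (k : ℝ) * (if σ = τ then (1:ℝ) else 0) := by
  have hmerge : ∀ η : {t : Finset (Fin n) // t.card = k - 1},
      (if η.1 ⊆ σ.1 then (1:ℝ) else 0) * (if η.1 ⊆ τ.1 then (1:ℝ) else 0)
      = if η.1 ⊆ σ.1 ∩ τ.1 then (1:ℝ) else 0 := by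
    intro η
    by_cases h1 : η.1 ⊆ σ.1 <;> by_cases h2 : η.1 ⊆ τ.1 <;>
      simp [h1, h2, Finset.subset_inter_iff]
  rw [Finset.sum_congr rfl (fun η _ => hmerge η), sum_incl]
  by_cases hst : σ = τ
  · subst hst
    rw [Finset.inter_self, σ.2, choose_pred hk,
      if_neg ((tokenGraph n k ⊤).irrefl (v := σ)), if_pos rfl]
    ring
  · have hle : (σ.1 ∩ τ.1).card ≤ k := by
      have h0 : σ.1 ∩ τ.1 ⊆ σ.1 := Finset.inter_subset_left
      have := Finset.card_le_card h0
      rwa [σ.2] at this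
    have hnek : (σ.1 ∩ τ.1).card ≠ k := by
      intro h
      have h1 : σ.1 ∩ τ.1 = σ.1 :=
        Finset.eq_of_subset_of_card_le Finset.inter_subset_left (by rw [σ.2, h])
      have h2 : σ.1 ⊆ τ.1 := by rw [← h1]; exact Finset.inter_subset_right
      have h3 : σ.1 = τ.1 := Finset.eq_of_subset_of_card_le h2 (by rw [σ.2, τ.2])
      exact hst (Subtype.ext h3)
    by_cases hc : (σ.1 ∩ τ.1).card = k - 1
    · rw [if_pos ((tokenTopAdj_iff hk σ τ).2 ⟨hst, hc⟩), if_neg hst, hc, Nat.choose_self]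
      norm_num
    · have hlt : (σ.1 ∩ τ.1).card < k - 1 := by omega
      have hadj : ¬ (tokenGraph n k ⊤).Adj σ τ :=
        fun h => hc ((tokenTopAdj_iff hk σ τ).1 h).2
      rw [if_neg hadj, if_neg hst, Nat.choose_eq_zero_of_lt hlt]
      norm_num

private lemma lapTop_mulVec (hk : 1 ≤ k) (hkn : k ≤ n)
    (φ : {s : Finset (Fin n) // s.card = k} → ℝ)
    (hker : (inclMatrix n k (k - 1))ᵀ *ᵥ φ = 0) :
    lapTok n k ⊤ *ᵥ φ = ((k:ℝ) * ((n:ℝ) - k + 1)) • φ := by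
  have hker' : ∀ η : {t : Finset (Fin n) // t.card = k - 1},
      ∑ τ : {s : Finset (Fin n) // s.card = k}, (if η.1 ⊆ τ.1 then (1:ℝ) else 0) * φ τ = 0 := by
    intro η
    have h := congrFun hker η
    simpa [Matrix.mulVec, Matrix.transpose_apply, inclMatrix, dotProduct] using h
  have key : ∀ (x : {s : Finset (Fin n) // s.card = k} → ℝ) σ,
      ∑ τ : {s : Finset (Fin n) // s.card = k},
        (if (tokenGraph n k ⊤).Adj σ τ then (1:ℝ) else 0) * x τ
      = (∑ η : {t : Finset (Fin n) // t.card = k - 1},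
          (if η.1 ⊆ σ.1 then (1:ℝ) else 0) *
            ∑ τ : {s : Finset (Fin n) // s.card = k},
              (if η.1 ⊆ τ.1 then (1:ℝ) else 0) * x τ)
        - (k : ℝ) * x σ := by
    intro x σ
    have hterm : ∀ τ, (if (tokenGraph n k ⊤).Adj σ τ then (1:ℝ) else 0) * x τ
        = (∑ η : {t : Finset (Fin n) // t.card = k - 1},
            (if η.1 ⊆ σ.1 then (1:ℝ) else 0) * (if η.1 ⊆ τ.1 then (1:ℝ) else 0)) * x τ
          - (k : ℝ) * ((if σ = τ then (1:ℝ) else 0) * x τ) := by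
      intro τ
      rw [claimC hk σ τ]
      ring
    rw [Finset.sum_congr rfl (fun τ _ => hterm τ), Finset.sum_sub_distrib]
    congr 1
    · simp_rw [Finset.sum_mul]
      rw [Finset.sum_comm]
      simp_rw [mul_assoc, ← Finset.mul_sum]
    · rw [← Finset.mul_sum]
      congr 1
      simp_rw [ite_mul, one_mul, zero_mul]
      rw [Finset.sum_ite_eq]
      simp
  funext σ
  rw [lapTok, SimpleGraph.lapMatrix_mulVec_apply]
  have hdeg : (((tokenGraph n k ⊤).degree σ : ℕ) : ℝ) = (k:ℝ) * ((n:ℝ) - k + 1) - k := by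
    rw [SimpleGraph.degree_eq_sum_if_adj]
    have h1 := key (fun _ => 1) σ
    simp only [mul_one] at h1
    rw [h1, Finset.sum_congr rfl (fun η _ => by rw [card_supersets hk hkn η.1 η.2]),
      ← Finset.sum_mul, sum_incl, σ.2, choose_pred hk]
  have hsum : ∑ τ ∈ (tokenGraph n k ⊤).neighborFinset σ, φ τ = -((k:ℝ) * φ σ) := by
    rw [SimpleGraph.neighborFinset_eq_filter, Finset.sum_filter]
    have h2 := key φ σ
    simp only [hker', mul_zero, Finset.sum_const_zero, zero_sub] at h2
    rw [← h2]
    exact Finset.sum_congr rfl fun τ _ => by split <;> simp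
  rw [hdeg, hsum, Pi.smul_apply, smul_eq_mul]
  ring

end Aux

/-- If `φ` with `B_{n,k,k-1}ᵀ φ = 0` is an eigenvector of `L_k(G)` with eigenvalue `λ`, then
`φ` is an eigenvector of `L_k(Ḡ)` with eigenvalue `k(n - k + 1) - λ`. -/
theorem token_complement_eigenvector (n k : ℕ) (G : SimpleGraph (Fin n)) (hk : 1 ≤ k)
    (hkn : k ≤ n / 2) (lam : ℝ) (φ : {s : Finset (Fin n) // s.card = k} → ℝ) (hφ0 : φ ≠ 0)
    (hker : (inclMatrix n k (k - 1))ᵀ *ᵥ φ = 0)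
    (hφ : lapTok n k G *ᵥ φ = lam • φ) :
    lapTok n k Gᶜ *ᵥ φ = ((k : ℝ) * ((n : ℝ) - (k : ℝ) + 1) - lam) • φ := by
  have hkn' : k ≤ n := le_trans hkn (Nat.div_le_self n 2)
  have hJ := lapTop_mulVec hk hkn' φ hker
  have hadd := lapTok_add (n := n) (k := k) G
  have hC : lapTok n k Gᶜ = lapTok n k ⊤ - lapTok n k G := by
    rw [← hadd, add_sub_cancel_left]
  rw [hC, Matrix.sub_mulVec, hJ, hφ, ← sub_smul]
end

section
/- Let G be a graph on [n], 1 ≤ k ≤ ⌊n/2⌋, and suppose φ₁, …, φ_N (N = C(n,k−1)) form an eigenbasis of L_{k−1}(G) with eigenvalues λ₁, …, λ_N. Then B_{n,k,k−1}φ₁, …, B_{n,k,k−1}φ_N are linearly independent eigenvectors of L_k(G) with the same respective eigenvalues λ₁, …, λ_N. -/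
open Finset Matrix

variable {n : ℕ}

open Classical in
/-- indicator -/
noncomputable def e (p : Prop) : ℝ := if p then 1 else 0

lemma e_true (p : Prop) (h : p) : e p = 1 := by simp [e, h]
lemma e_false (p : Prop) (h : ¬ p) : e p = 0 := by simp [e, h]
lemma e_mul_e (p q : Prop) : e p * e q = e (p ∧ q) := by
  by_cases hp : p <;> by_cases hq : q <;> simp [e, hp, hq]

/-- master pointwise lemma, case S ⊆ A -/
lemma master_sub {A S : Finset (Fin n)} (hSA : S ⊆ A) {u v : Fin n} (huv : u ≠ v) :
    e (u ∈ A) * e (v ∉ A) * (e (S ⊆ A) - e (S ⊆ insert v (A.erase u)))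
      = e (u ∈ S) * e (v ∉ S) * (e (S ⊆ A) - e (insert v (S.erase u) ⊆ A)) := by
  rw [e_true _ hSA]
  by_cases hv : v ∈ A
  · rw [e_false (v ∉ A) (by simpa using hv)]
    by_cases hu : u ∈ S
    · by_cases hvS : v ∈ S
      · rw [e_false (v ∉ S) (by simpa using hvS)]; ring
      · have : insert v (S.erase u) ⊆ A := by
          intro x hx
          rcases Finset.mem_insert.mp hx with rfl | hx
          · exact hv
          · exact hSA (Finset.mem_of_mem_erase hx)
        rw [e_true _ this]; ring
    · rw [e_false (u ∈ S) hu]; ring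
  · have hvS : v ∉ S := fun h => hv (hSA h)
    rw [e_true (v ∉ A) hv, e_true (v ∉ S) hvS]
    by_cases hu : u ∈ S
    · have h1 : ¬ S ⊆ insert v (A.erase u) := by
        intro h
        rcases Finset.mem_insert.mp (h hu) with h' | h'
        · exact huv h'
        · exact (Finset.mem_erase.mp h').1 rfl
      have h2 : ¬ insert v (S.erase u) ⊆ A := fun h => hv (h (Finset.mem_insert_self _ _))
      rw [e_true _ (hSA hu), e_true _ hu, e_false _ h1, e_false _ h2]
    · rw [e_false (u ∈ S) hu]
      by_cases huA : u ∈ A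
      · have : S ⊆ insert v (A.erase u) := fun x hx =>
          Finset.mem_insert.mpr (Or.inr (Finset.mem_erase.mpr ⟨fun h => hu (h ▸ hx), hSA hx⟩))
        rw [e_true _ huA, e_true _ this]; ring
      · rw [e_false (u ∈ A) huA]; ring

/-- master pointwise lemma, case S ⊄ A -/
lemma master_nsub {A S : Finset (Fin n)} (hSA : ¬ S ⊆ A) {u v : Fin n} (huv : u ≠ v) :
    e (u ∈ A) * e (v ∉ A) * (e (S ⊆ A) - e (S ⊆ insert v (A.erase u)))
      = e (v ∈ S) * e (u ∉ S) * (e (S ⊆ A) - e (insert u (S.erase v) ⊆ A)) := by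
  rw [e_false _ hSA]
  have key : (u ∈ A ∧ v ∉ A ∧ S ⊆ insert v (A.erase u)) ↔
      (v ∈ S ∧ u ∉ S ∧ insert u (S.erase v) ⊆ A) := by
    constructor
    · rintro ⟨hu, hv, h⟩
      have hvS : v ∈ S := by
        by_contra hvS
        exact hSA (fun x hx => by
          rcases Finset.mem_insert.mp (h hx) with rfl | h'
          · exact absurd hx hvS
          · exact Finset.mem_of_mem_erase h')
      have huS : u ∉ S := by
        intro huS
        rcases Finset.mem_insert.mp (h huS) with h' | h'
        · exact huv h'
        · exact (Finset.mem_erase.mp h').1 rfl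
      refine ⟨hvS, huS, fun x hx => ?_⟩
      rcases Finset.mem_insert.mp hx with rfl | hx
      · exact hu
      · obtain ⟨hxv, hxS⟩ := Finset.mem_erase.mp hx
        rcases Finset.mem_insert.mp (h hxS) with rfl | h'
        · exact absurd rfl hxv
        · exact Finset.mem_of_mem_erase h'
    · rintro ⟨hvS, huS, h⟩
      have hu : u ∈ A := h (Finset.mem_insert_self _ _)
      have hv : v ∉ A := by
        intro hv
        exact hSA (fun x hx => by
          by_cases hxv : x = v
          · exact hxv ▸ hv
          · exact h (Finset.mem_insert.mpr (Or.inr (Finset.mem_erase.mpr ⟨hxv, hx⟩))))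
      refine ⟨hu, hv, fun x hx => ?_⟩
      by_cases hxv : x = v
      · exact Finset.mem_insert.mpr (Or.inl hxv)
      · refine Finset.mem_insert.mpr (Or.inr (Finset.mem_erase.mpr ⟨fun h' => huS (h' ▸ hx), ?_⟩))
        exact h (Finset.mem_insert.mpr (Or.inr (Finset.mem_erase.mpr ⟨hxv, hx⟩)))
  by_cases h : u ∈ A ∧ v ∉ A ∧ S ⊆ insert v (A.erase u)
  · obtain ⟨h1, h2, h3⟩ := h
    obtain ⟨h4, h5, h6⟩ := key.mp ⟨h1, h2, h3⟩
    rw [e_true _ h1, e_true (v ∉ A) h2, e_true _ h3, e_true _ h4,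
      e_true (u ∉ S) h5, e_true _ h6]
  · have h' : ¬ (v ∈ S ∧ u ∉ S ∧ insert u (S.erase v) ⊆ A) := fun hh => h (key.mpr hh)
    have L0 : e (u ∈ A) * e (v ∉ A) * e (S ⊆ insert v (A.erase u)) = 0 := by
      rw [e_mul_e, e_mul_e, e_false _ (by tauto)]
    have R0 : e (v ∈ S) * e (u ∉ S) * e (insert u (S.erase v) ⊆ A) = 0 := by
      rw [e_mul_e, e_mul_e, e_false _ (by tauto)]
    linear_combination R0 - L0

section Chunk2
variable {n k : ℕ} {G : SimpleGraph (Fin n)}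

abbrev K (n k : ℕ) := {s : Finset (Fin n) // s.card = k}

lemma e_congr {p q : Prop} (h : p ↔ q) : e p = e q := by
  by_cases hp : p
  · rw [e_true _ hp, e_true _ (h.mp hp)]
  · rw [e_false _ hp, e_false _ (fun hq => hp (h.mpr hq))]

lemma mv_card {A : Finset (Fin n)} {u v : Fin n} (hu : u ∈ A) (hv : v ∉ A) :
    (insert v (A.erase u)).card = A.card := by
  rw [Finset.card_insert_of_notMem (fun h => hv (Finset.mem_of_mem_erase h)),
    Finset.card_erase_of_mem hu]
  have : 0 < A.card := Finset.card_pos.mpr ⟨u, hu⟩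
  omega

noncomputable def mvK (A : K n k) (u v : Fin n) : K n k :=
  if h : u ∈ A.1 ∧ v ∉ A.1 then ⟨insert v (A.1.erase u), by rw [mv_card h.1 h.2]; exact A.2⟩
  else A

lemma mvK_val {A : K n k} {u v : Fin n} (h1 : u ∈ A.1) (h2 : v ∉ A.1) :
    (mvK A u v).1 = insert v (A.1.erase u) := by rw [mvK, dif_pos ⟨h1, h2⟩]

lemma move_of_sd {A B : Finset (Fin n)} (hcard : A.card = B.card) {u v : Fin n} (huv : u ≠ v)
    (hsd : symmDiff A B = {u, v}) (hu : u ∈ A) :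
    u ∉ B ∧ v ∈ B ∧ v ∉ A ∧ B = insert v (A.erase u) := by
  have humem : u ∈ symmDiff A B := hsd ▸ Finset.mem_insert_self u {v}
  have hvmem : v ∈ symmDiff A B := hsd ▸ Finset.mem_insert_of_mem (Finset.mem_singleton_self v)
  have huB : u ∉ B := by
    rcases Finset.mem_symmDiff.mp humem with ⟨_, h⟩ | ⟨_, h⟩
    · exact h
    · exact absurd hu h
  have hv : v ∈ B ∧ v ∉ A := by
    rcases Finset.mem_symmDiff.mp hvmem with ⟨hvA, hvB⟩ | h
    · exfalso
      have hBA : B ⊆ A := by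
        intro x hxB
        by_contra hxA
        have : x ∈ symmDiff A B := Finset.mem_symmDiff.mpr (Or.inr ⟨hxB, hxA⟩)
        rw [hsd] at this
        rcases Finset.mem_insert.mp this with rfl | h'
        · exact hxA hu
        · rw [Finset.mem_singleton] at h'
          exact hxA (h' ▸ hvA)
      have : A = B := (Finset.eq_of_subset_of_card_le hBA (le_of_eq hcard)).symm
      rw [this, symmDiff_self] at hsd
      have : u ∈ (⊥ : Finset (Fin n)) := hsd ▸ Finset.mem_insert_self u {v}
      simp at this
    · exact ⟨h.1, h.2⟩
  refine ⟨huB, hv.1, hv.2, ?_⟩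
  ext x
  simp only [Finset.mem_insert, Finset.mem_erase]
  constructor
  · intro hxB
    by_cases hxA : x ∈ A
    · exact Or.inr ⟨fun h => huB (h ▸ hxB), hxA⟩
    · have : x ∈ symmDiff A B := Finset.mem_symmDiff.mpr (Or.inr ⟨hxB, hxA⟩)
      rw [hsd] at this
      rcases Finset.mem_insert.mp this with rfl | h'
      · exact absurd hu hxA
      · exact Or.inl (Finset.mem_singleton.mp h')
  · rintro (rfl | ⟨hxu, hxA⟩)
    · exact hv.1
    · by_contra hxB
      have : x ∈ symmDiff A B := Finset.mem_symmDiff.mpr (Or.inl ⟨hxA, hxB⟩)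
      rw [hsd] at this
      rcases Finset.mem_insert.mp this with rfl | h'
      · exact hxu rfl
      · rw [Finset.mem_singleton] at h'
        exact hv.2 (h' ▸ hxA)

lemma tokenAdj_iff_s19 {A B : K n k} :
    (tokenGraph n k G).Adj A B ↔
      ∃ u v, G.Adj u v ∧ u ∈ A.1 ∧ v ∉ A.1 ∧ B = mvK A u v := by
  constructor
  · intro hadj
    rw [tokenGraph, SimpleGraph.fromRel_adj] at hadj
    obtain ⟨hne, hrel⟩ := hadj
    have hcard : A.1.card = B.1.card := by rw [A.2, B.2]
    obtain ⟨hc, u, v, hGuv, hsd⟩ : (A.1 ∩ B.1).card = k - 1 ∧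
        ∃ u v, G.Adj u v ∧ symmDiff A.1 B.1 = {u, v} := by
      rcases hrel with h | h
      · exact h
      · obtain ⟨h1, u, v, h2, h3⟩ := h
        rw [Finset.inter_comm] at h1
        rw [symmDiff_comm] at h3
        exact ⟨h1, u, v, h2, h3⟩
    by_cases hu : u ∈ A.1
    · obtain ⟨_, _, hvA, hB⟩ := move_of_sd hcard hGuv.ne hsd hu
      exact ⟨u, v, hGuv, hu, hvA, Subtype.ext (by rw [mvK_val hu hvA]; exact hB)⟩
    · have hvA : v ∈ A.1 := by
        have hvmem : v ∈ symmDiff A.1 B.1 :=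
          hsd ▸ Finset.mem_insert_of_mem (Finset.mem_singleton_self v)
        rcases Finset.mem_symmDiff.mp hvmem with h | ⟨hvB, hvA⟩
        · exact h.1
        · exfalso
          have humem : u ∈ symmDiff A.1 B.1 := hsd ▸ Finset.mem_insert_self u {v}
          have huB : u ∈ B.1 := by
            rcases Finset.mem_symmDiff.mp humem with ⟨h1, _⟩ | ⟨h1, _⟩
            · exact absurd h1 hu
            · exact h1
          have hAB : A.1 ⊆ B.1 := by
            intro x hxA
            by_contra hxB
            have : x ∈ symmDiff A.1 B.1 := Finset.mem_symmDiff.mpr (Or.inl ⟨hxA, hxB⟩)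
            rw [hsd] at this
            rcases Finset.mem_insert.mp this with rfl | h'
            · exact hu hxA
            · exact hvA (Finset.mem_singleton.mp h' ▸ hxA)
          exact hne (Subtype.ext (Finset.eq_of_subset_of_card_le hAB (le_of_eq hcard.symm)))
      have hsd' : symmDiff A.1 B.1 = {v, u} := by rw [hsd, Finset.pair_comm]
      obtain ⟨_, _, huA, hB⟩ := move_of_sd hcard hGuv.ne.symm hsd' hvA
      exact ⟨v, u, hGuv.symm, hvA, huA, Subtype.ext (by rw [mvK_val hvA huA]; exact hB)⟩
  · rintro ⟨u, v, hGuv, hu, hv, rfl⟩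
    have huv : u ≠ v := hGuv.ne
    have hval : (mvK A u v).1 = insert v (A.1.erase u) := mvK_val hu hv
    have hne : A ≠ mvK A u v := by
      intro h
      rw [h] at hv
      exact hv (by rw [hval]; exact Finset.mem_insert_self _ _)
    rw [tokenGraph, SimpleGraph.fromRel_adj]
    refine ⟨hne, Or.inl ⟨?_, u, v, hGuv, ?_⟩⟩
    · have hinter : A.1 ∩ (mvK A u v).1 = A.1.erase u := by
        rw [hval]
        ext x
        simp only [Finset.mem_inter, Finset.mem_insert, Finset.mem_erase]
        constructor
        · rintro ⟨hxA, rfl | h⟩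
          · exact absurd hxA hv
          · exact h
        · exact fun h => ⟨h.2, Or.inr h⟩
      rw [hinter, Finset.card_erase_of_mem hu, A.2]
    · have h1 : A.1 \ (mvK A u v).1 = {u} := by
        rw [hval]
        ext x
        simp only [Finset.mem_sdiff, Finset.mem_insert, Finset.mem_erase, Finset.mem_singleton]
        constructor
        · rintro ⟨hxA, hx⟩
          push_neg at hx
          by_contra hxu
          exact (hx.2 hxu) hxA
        · rintro rfl
          refine ⟨hu, ?_⟩
          push_neg
          exact ⟨huv, fun h => absurd rfl h⟩
      have h2 : (mvK A u v).1 \ A.1 = {v} := by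
        rw [hval]
        ext x
        simp only [Finset.mem_sdiff, Finset.mem_insert, Finset.mem_erase, Finset.mem_singleton]
        constructor
        · rintro ⟨rfl | h, hxA⟩
          · rfl
          · exact absurd h.2 hxA
        · rintro rfl
          exact ⟨Or.inl rfl, hv⟩
      rw [symmDiff_def, Finset.sup_eq_union, h1, h2]
      ext x
      simp [Finset.mem_union, Finset.mem_insert]

lemma mvK_inj {A : K n k} {u v u' v' : Fin n} (hu : u ∈ A.1) (hv : v ∉ A.1)
    (hu' : u' ∈ A.1) (hv' : v' ∉ A.1) (h : mvK A u v = mvK A u' v') : u = u' ∧ v = v' := by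
  have hval : insert v (A.1.erase u) = insert v' (A.1.erase u') := by
    rw [← mvK_val hu hv, ← mvK_val hu' hv', h]
  have hvv : v = v' := by
    have : v ∈ insert v' (A.1.erase u') := hval ▸ Finset.mem_insert_self v _
    rcases Finset.mem_insert.mp this with h' | h'
    · exact h'
    · exact absurd (Finset.mem_of_mem_erase h') hv
  refine ⟨?_, hvv⟩
  by_contra huu
  have h1 : u ∈ insert v' (A.1.erase u') :=
    Finset.mem_insert.mpr (Or.inr (Finset.mem_erase.mpr ⟨huu, hu⟩))
  rw [← hval] at h1
  rcases Finset.mem_insert.mp h1 with h' | h'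
  · exact hv (h' ▸ hu)
  · exact (Finset.mem_erase.mp h').1 rfl

end Chunk2

section Chunk3
variable {n k : ℕ} {G : SimpleGraph (Fin n)}

lemma sum_e_mul {α : Type*} [Fintype α] (P : α → Prop) [DecidablePred P] (f : α → ℝ) :
    ∑ x : α, e (P x) * f x = ∑ x ∈ Finset.univ.filter P, f x := by
  rw [Finset.sum_filter]
  refine Finset.sum_congr rfl fun x _ => ?_
  by_cases h : P x <;> simp [e, h]

lemma sum_adj_eq (A : K n k) (h : K n k → ℝ) :
    ∑ B : K n k, e ((tokenGraph n k G).Adj A B) * h B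
      = ∑ p : Fin n × Fin n, e (G.Adj p.1 p.2 ∧ p.1 ∈ A.1 ∧ p.2 ∉ A.1) * h (mvK A p.1 p.2) := by
  classical
  rw [sum_e_mul, sum_e_mul]
  refine (Finset.sum_bij (fun p (_ : p ∈ Finset.univ.filter
      (fun p : Fin n × Fin n => G.Adj p.1 p.2 ∧ p.1 ∈ A.1 ∧ p.2 ∉ A.1)) => mvK A p.1 p.2)
      ?_ ?_ ?_ ?_).symm
  · intro p hp
    rw [Finset.mem_filter] at hp ⊢
    obtain ⟨_, h1, h2, h3⟩ := hp
    exact ⟨Finset.mem_univ _, tokenAdj_iff_s19.mpr ⟨p.1, p.2, h1, h2, h3, rfl⟩⟩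
  · intro p1 hp1 p2 hp2 heq
    rw [Finset.mem_filter] at hp1 hp2
    obtain ⟨_, _, h2, h3⟩ := hp1
    obtain ⟨_, _, h2', h3'⟩ := hp2
    obtain ⟨hu, hv⟩ := mvK_inj h2 h3 h2' h3' heq
    exact Prod.ext hu hv
  · intro B hB
    rw [Finset.mem_filter] at hB
    obtain ⟨u, v, h1, h2, h3, rfl⟩ := tokenAdj_iff_s19.mp hB.2
    exact ⟨(u, v), Finset.mem_filter.mpr ⟨Finset.mem_univ _, h1, h2, h3⟩, rfl⟩
  · intro p hp
    rfl

lemma deg_eq_sum_e (A : K n k) :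
    ((tokenGraph n k G).degree A : ℝ) = ∑ B : K n k, e ((tokenGraph n k G).Adj A B) := by
  rw [SimpleGraph.degree_eq_sum_if_adj]
  refine Finset.sum_congr rfl fun B _ => ?_
  by_cases h : (tokenGraph n k G).Adj A B <;> simp [e, h]

lemma incl_eq_e {l : ℕ} (σ : K n k) (η : K n l) : inclMatrix n k l σ η = e (η.1 ⊆ σ.1) := by
  by_cases h : η.1 ⊆ σ.1 <;> simp [inclMatrix, e, h]

lemma lap_eq_e {V : Type*} [Fintype V] [DecidableEq V] (G' : SimpleGraph V)
    [DecidableRel G'.Adj] (i j : V) :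
    G'.lapMatrix ℝ i j = e (i = j) * (G'.degree i : ℝ) - e (G'.Adj i j) := by
  rw [SimpleGraph.lapMatrix, Matrix.sub_apply, SimpleGraph.degMatrix, Matrix.diagonal_apply,
    SimpleGraph.adjMatrix_apply]
  by_cases h : i = j <;> by_cases h2 : G'.Adj i j <;> simp [e, h, h2]

lemma pair_master (G : SimpleGraph (Fin n)) (A S : Finset (Fin n)) (u v : Fin n) :
    e (G.Adj u v ∧ u ∈ A ∧ v ∉ A) * (e (S ⊆ A) - e (S ⊆ insert v (A.erase u)))
      + e (G.Adj v u ∧ v ∈ A ∧ u ∉ A) * (e (S ⊆ A) - e (S ⊆ insert u (A.erase v)))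
      = e (G.Adj u v ∧ u ∈ S ∧ v ∉ S) * (e (S ⊆ A) - e (insert v (S.erase u) ⊆ A))
        + e (G.Adj v u ∧ v ∈ S ∧ u ∉ S) * (e (S ⊆ A) - e (insert u (S.erase v) ⊆ A)) := by
  by_cases hadj : G.Adj u v
  · have hvu : G.Adj v u := hadj.symm
    have huv : u ≠ v := hadj.ne
    rw [(e_congr (and_iff_right hadj)).trans (e_mul_e _ _).symm,
      (e_congr (and_iff_right hvu)).trans (e_mul_e _ _).symm,
      (e_congr (and_iff_right hadj)).trans (e_mul_e _ _).symm,
      (e_congr (and_iff_right hvu)).trans (e_mul_e _ _).symm]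
    by_cases hSA : S ⊆ A
    · linear_combination master_sub hSA huv + master_sub hSA huv.symm
    · linear_combination master_nsub hSA huv + master_nsub hSA huv.symm
  · have hvu : ¬ G.Adj v u := fun h => hadj h.symm
    rw [e_false (G.Adj u v ∧ u ∈ A ∧ v ∉ A) (fun h => hadj h.1),
      e_false (G.Adj v u ∧ v ∈ A ∧ u ∉ A) (fun h => hvu h.1),
      e_false (G.Adj u v ∧ u ∈ S ∧ v ∉ S) (fun h => hadj h.1),
      e_false (G.Adj v u ∧ v ∈ S ∧ u ∉ S) (fun h => hvu h.1)]
    ring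

lemma sum_swap_eq (F : Fin n × Fin n → ℝ) :
    ∑ p : Fin n × Fin n, F p = ∑ p : Fin n × Fin n, F p.swap :=
  (Fintype.sum_equiv (Equiv.prodComm (Fin n) (Fin n)) (fun p => F p.swap) F fun p => rfl).symm

lemma half_sum (Fl Fr : Fin n × Fin n → ℝ)
    (h : ∀ p : Fin n × Fin n, Fl p + Fl p.swap = Fr p + Fr p.swap) :
    ∑ p : Fin n × Fin n, Fl p = ∑ p : Fin n × Fin n, Fr p := by
  have h2 : ∑ p : Fin n × Fin n, (Fl p + Fl p.swap) = ∑ p : Fin n × Fin n, (Fr p + Fr p.swap) :=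
    Finset.sum_congr rfl fun p _ => h p
  rw [Finset.sum_add_distrib, Finset.sum_add_distrib, ← sum_swap_eq Fl, ← sum_swap_eq Fr] at h2
  linarith

lemma sum_master (G : SimpleGraph (Fin n)) (A S : Finset (Fin n)) :
    ∑ p : Fin n × Fin n,
        e (G.Adj p.1 p.2 ∧ p.1 ∈ A ∧ p.2 ∉ A) * (e (S ⊆ A) - e (S ⊆ insert p.2 (A.erase p.1)))
      = ∑ p : Fin n × Fin n,
          e (G.Adj p.1 p.2 ∧ p.1 ∈ S ∧ p.2 ∉ S)
            * (e (S ⊆ A) - e (insert p.2 (S.erase p.1) ⊆ A)) := by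
  exact half_sum _ _ fun p => pair_master G A S p.1 p.2

end Chunk3

section Chunk4
variable {n k : ℕ}

lemma comm_mat (G : SimpleGraph (Fin n)) :
    lapTok n k G * inclMatrix n k (k - 1) = inclMatrix n k (k - 1) * lapTok n (k - 1) G := by
  classical
  ext A S
  rw [Matrix.mul_apply, Matrix.mul_apply]
  -- LHS
  have hLHS : ∀ B : K n k, lapTok n k G A B * inclMatrix n k (k - 1) B S
      = e (A = B) * ((tokenGraph n k G).degree A : ℝ) * e (S.1 ⊆ B.1)
        - e ((tokenGraph n k G).Adj A B) * e (S.1 ⊆ B.1) := by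
    intro B
    rw [lapTok, lap_eq_e, incl_eq_e]
    ring
  have hdiagA : ∑ B : K n k,
      e (A = B) * ((tokenGraph n k G).degree A : ℝ) * e (S.1 ⊆ B.1)
      = ((tokenGraph n k G).degree A : ℝ) * e (S.1 ⊆ A.1) := by
    rw [Finset.sum_eq_single A
        (fun B _ hBA => by rw [e_false (A = B) (fun h => hBA h.symm)]; ring)
        (fun h => absurd (Finset.mem_univ A) h), e_true _ rfl]
    ring
  have hdegA : ((tokenGraph n k G).degree A : ℝ)
      = ∑ p : Fin n × Fin n, e (G.Adj p.1 p.2 ∧ p.1 ∈ A.1 ∧ p.2 ∉ A.1) := by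
    rw [deg_eq_sum_e]
    simpa using sum_adj_eq (G := G) A (fun _ => 1)
  have hadjA : ∑ B : K n k, e ((tokenGraph n k G).Adj A B) * e (S.1 ⊆ B.1)
      = ∑ p : Fin n × Fin n,
          e (G.Adj p.1 p.2 ∧ p.1 ∈ A.1 ∧ p.2 ∉ A.1) * e (S.1 ⊆ (mvK A p.1 p.2).1) :=
    sum_adj_eq A (fun B => e (S.1 ⊆ B.1))
  have hL : ∑ B : K n k, lapTok n k G A B * inclMatrix n k (k - 1) B S
      = ∑ p : Fin n × Fin n,
          e (G.Adj p.1 p.2 ∧ p.1 ∈ A.1 ∧ p.2 ∉ A.1)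
            * (e (S.1 ⊆ A.1) - e (S.1 ⊆ insert p.2 (A.1.erase p.1))) := by
    rw [Finset.sum_congr rfl fun B _ => hLHS B, Finset.sum_sub_distrib, hdiagA, hadjA, hdegA,
      Finset.sum_mul, ← Finset.sum_sub_distrib]
    refine Finset.sum_congr rfl fun p _ => ?_
    by_cases h : G.Adj p.1 p.2 ∧ p.1 ∈ A.1 ∧ p.2 ∉ A.1
    · rw [mvK_val h.2.1 h.2.2]; ring
    · rw [e_false _ h]; ring
  -- RHS
  have hRHS : ∀ S' : K n (k - 1), inclMatrix n k (k - 1) A S' * lapTok n (k - 1) G S' S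
      = e (S' = S) * ((tokenGraph n (k - 1) G).degree S' : ℝ) * e (S'.1 ⊆ A.1)
        - e ((tokenGraph n (k - 1) G).Adj S S') * e (S'.1 ⊆ A.1) := by
    intro S'
    rw [lapTok, lap_eq_e, incl_eq_e, e_congr ((tokenGraph n (k - 1) G).adj_comm S' S)]
    ring
  have hdiagS : ∑ S' : K n (k - 1),
      e (S' = S) * ((tokenGraph n (k - 1) G).degree S' : ℝ) * e (S'.1 ⊆ A.1)
      = ((tokenGraph n (k - 1) G).degree S : ℝ) * e (S.1 ⊆ A.1) := by
    rw [Finset.sum_eq_single S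
        (fun S' _ hne => by rw [e_false (S' = S) hne]; ring)
        (fun h => absurd (Finset.mem_univ S) h), e_true _ rfl]
    ring
  have hdegS : ((tokenGraph n (k - 1) G).degree S : ℝ)
      = ∑ p : Fin n × Fin n, e (G.Adj p.1 p.2 ∧ p.1 ∈ S.1 ∧ p.2 ∉ S.1) := by
    rw [deg_eq_sum_e]
    simpa using sum_adj_eq (G := G) S (fun _ => 1)
  have hadjS : ∑ S' : K n (k - 1), e ((tokenGraph n (k - 1) G).Adj S S') * e (S'.1 ⊆ A.1)
      = ∑ p : Fin n × Fin n,
          e (G.Adj p.1 p.2 ∧ p.1 ∈ S.1 ∧ p.2 ∉ S.1) * e ((mvK S p.1 p.2).1 ⊆ A.1) :=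
    sum_adj_eq S (fun S' => e (S'.1 ⊆ A.1))
  have hR : ∑ S' : K n (k - 1), inclMatrix n k (k - 1) A S' * lapTok n (k - 1) G S' S
      = ∑ p : Fin n × Fin n,
          e (G.Adj p.1 p.2 ∧ p.1 ∈ S.1 ∧ p.2 ∉ S.1)
            * (e (S.1 ⊆ A.1) - e (insert p.2 (S.1.erase p.1) ⊆ A.1)) := by
    rw [Finset.sum_congr rfl fun S' _ => hRHS S', Finset.sum_sub_distrib, hdiagS, hadjS, hdegS,
      Finset.sum_mul, ← Finset.sum_sub_distrib]
    refine Finset.sum_congr rfl fun p _ => ?_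
    by_cases h : G.Adj p.1 p.2 ∧ p.1 ∈ S.1 ∧ p.2 ∉ S.1
    · rw [mvK_val h.2.1 h.2.2]; ring
    · rw [e_false _ h]; ring
  rw [hL, hR]
  exact sum_master G A.1 S.1

end Chunk4

section Chunk5
variable {n k : ℕ}
open scoped Classical

lemma card_supersets_s19 (hk : 1 ≤ k) (S : Finset (Fin n)) (hS : S.card = k - 1) :
    (Finset.univ.filter (fun A : K n k => S ⊆ A.1)).card = n - (k - 1) := by
  have hcompl : (Sᶜ : Finset (Fin n)).card = n - (k - 1) := by
    rw [Finset.card_compl, hS, Fintype.card_fin]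
  rw [← hcompl]
  refine (Finset.card_bij (fun (a : Fin n) (ha : a ∈ Sᶜ) =>
      (⟨insert a S, by
        rw [Finset.card_insert_of_notMem (Finset.mem_compl.mp ha), hS]; omega⟩ : K n k))
      ?_ ?_ ?_).symm
  · intro a ha
    exact Finset.mem_filter.mpr ⟨Finset.mem_univ _, Finset.subset_insert _ _⟩
  · intro a ha b hb heq
    have : insert a S = insert b S := congrArg Subtype.val heq
    have ha' : a ∈ insert b S := this ▸ Finset.mem_insert_self a S
    rcases Finset.mem_insert.mp ha' with h | h
    · exact h
    · exact absurd h (Finset.mem_compl.mp ha)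
  · intro A hA
    have hsub : S ⊆ A.1 := (Finset.mem_filter.mp hA).2
    have hcard : (A.1 \ S).card = 1 := by
      rw [Finset.card_sdiff_of_subset hsub, A.2, hS]; omega
    obtain ⟨a, ha⟩ := Finset.card_eq_one.mp hcard
    have haS : a ∉ S := by
      have : a ∈ A.1 \ S := ha ▸ Finset.mem_singleton_self a
      exact (Finset.mem_sdiff.mp this).2
    refine ⟨a, Finset.mem_compl.mpr haS, ?_⟩
    apply Subtype.ext
    show insert a S = A.1
    have := Finset.union_sdiff_of_subset hsub
    rw [ha] at this
    rw [← this, Finset.insert_eq, Finset.union_comm]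

lemma card_subsets (hk : 2 ≤ k) (S : Finset (Fin n)) (hS : S.card = k - 1) :
    (Finset.univ.filter (fun R : K n (k - 2) => R.1 ⊆ S)).card = k - 1 := by
  rw [← hS]
  refine (Finset.card_bij (fun (u : Fin n) (hu : u ∈ S) =>
      (⟨S.erase u, by rw [Finset.card_erase_of_mem hu, hS]; omega⟩ : K n (k - 2)))
      ?_ ?_ ?_).symm
  · intro u hu
    exact Finset.mem_filter.mpr ⟨Finset.mem_univ _, Finset.erase_subset _ _⟩
  · intro u hu u' hu' heq
    have heq' : S.erase u = S.erase u' := congrArg Subtype.val heq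
    by_contra hne
    have : u ∈ S.erase u' := Finset.mem_erase.mpr ⟨hne, hu⟩
    rw [← heq'] at this
    exact (Finset.mem_erase.mp this).1 rfl
  · intro R hR
    have hsub : R.1 ⊆ S := (Finset.mem_filter.mp hR).2
    have hcard : (S \ R.1).card = 1 := by
      rw [Finset.card_sdiff_of_subset hsub, R.2, hS]; omega
    obtain ⟨u, hu⟩ := Finset.card_eq_one.mp hcard
    have huS : u ∈ S := by
      have : u ∈ S \ R.1 := hu ▸ Finset.mem_singleton_self u
      exact (Finset.mem_sdiff.mp this).1
    refine ⟨u, huS, ?_⟩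
    apply Subtype.ext
    show S.erase u = R.1
    rw [Finset.erase_eq, ← hu, Finset.sdiff_sdiff_eq_self hsub]

lemma count_eq (hk : 2 ≤ k) (hkn : 2 * k ≤ n) (S T : K n (k - 1)) :
    (Finset.univ.filter (fun A : K n k => S.1 ⊆ A.1 ∧ T.1 ⊆ A.1)).card
      = (Finset.univ.filter (fun R : K n (k - 2) => R.1 ⊆ S.1 ∧ R.1 ⊆ T.1)).card
        + (n - 2 * k + 2) * (if S = T then 1 else 0) := by
  by_cases hST : S = T
  · subst hST
    rw [if_pos rfl, mul_one]
    have h1 : (Finset.univ.filter (fun A : K n k => S.1 ⊆ A.1 ∧ S.1 ⊆ A.1)).card = n - (k - 1) := by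
      rw [Finset.filter_congr (fun (A : K n k) _ => and_self_iff (a := S.1 ⊆ A.1))]
      exact card_supersets_s19 (by omega) S.1 S.2
    have h2 : (Finset.univ.filter (fun R : K n (k - 2) => R.1 ⊆ S.1 ∧ R.1 ⊆ S.1)).card = k - 1 := by
      rw [Finset.filter_congr (fun (R : K n (k - 2)) _ => and_self_iff (a := R.1 ⊆ S.1))]
      exact card_subsets hk S.1 S.2
    rw [h1, h2]
    omega
  · rw [if_neg hST, mul_zero, add_zero]
    have hcc : (S.1 ∩ T.1).card + (S.1 ∪ T.1).card = (k - 1) + (k - 1) := by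
      rw [Finset.card_inter_add_card_union, S.2, T.2]
    have hT_ne : ¬ T.1 ⊆ S.1 := by
      intro h
      exact hST (Subtype.ext (Finset.eq_of_subset_of_card_le h (by rw [S.2, T.2])).symm)
    have hunion_lb : k ≤ (S.1 ∪ T.1).card := by
      by_contra hlt
      push_neg at hlt
      have h1 : (S.1 ∪ T.1).card ≤ k - 1 := by omega
      have h2 : S.1 ⊆ S.1 ∪ T.1 := Finset.subset_union_left
      have h3 : S.1 = S.1 ∪ T.1 :=
        Finset.eq_of_subset_of_card_le h2 (by rw [S.2]; omega)
      exact hT_ne (fun x hx => h3 ▸ Finset.subset_union_right hx)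
    by_cases hcap : (S.1 ∪ T.1).card = k
    · have hIcard : (S.1 ∩ T.1).card = k - 2 := by omega
      have hA : Finset.univ.filter (fun A : K n k => S.1 ⊆ A.1 ∧ T.1 ⊆ A.1)
          = {⟨S.1 ∪ T.1, hcap⟩} := by
        ext A
        simp only [Finset.mem_filter, Finset.mem_univ, true_and, Finset.mem_singleton]
        constructor
        · rintro ⟨h1, h2⟩
          have hsub : S.1 ∪ T.1 ⊆ A.1 := Finset.union_subset h1 h2
          exact (Subtype.ext (Finset.eq_of_subset_of_card_le hsub (by rw [A.2, hcap]))).symm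
        · rintro rfl
          exact ⟨Finset.subset_union_left, Finset.subset_union_right⟩
      have hR : Finset.univ.filter (fun R : K n (k - 2) => R.1 ⊆ S.1 ∧ R.1 ⊆ T.1)
          = {⟨S.1 ∩ T.1, hIcard⟩} := by
        ext R
        simp only [Finset.mem_filter, Finset.mem_univ, true_and, Finset.mem_singleton]
        constructor
        · rintro ⟨h1, h2⟩
          have hsub : R.1 ⊆ S.1 ∩ T.1 := Finset.subset_inter h1 h2
          exact Subtype.ext (Finset.eq_of_subset_of_card_le hsub (by rw [R.2, hIcard]))
        · rintro rfl
          exact ⟨Finset.inter_subset_left, Finset.inter_subset_right⟩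
      rw [hA, hR]
      simp
    · have hgt : k + 1 ≤ (S.1 ∪ T.1).card := by omega
      have hA : Finset.univ.filter (fun A : K n k => S.1 ⊆ A.1 ∧ T.1 ⊆ A.1) = ∅ := by
        rw [Finset.filter_eq_empty_iff]
        rintro A - ⟨h1, h2⟩
        have hsub : S.1 ∪ T.1 ⊆ A.1 := Finset.union_subset h1 h2
        have := Finset.card_le_card hsub
        rw [A.2] at this
        omega
      have hR : Finset.univ.filter (fun R : K n (k - 2) => R.1 ⊆ S.1 ∧ R.1 ⊆ T.1) = ∅ := by
        rw [Finset.filter_eq_empty_iff]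
        rintro R - ⟨h1, h2⟩
        have hsub : R.1 ⊆ S.1 ∩ T.1 := Finset.subset_inter h1 h2
        have := Finset.card_le_card hsub
        rw [R.2] at this
        omega
      rw [hA, hR]
      simp

end Chunk5

set_option maxHeartbeats 1000000
section Chunk6
variable {n k : ℕ}
lemma sum_e_card {α : Type*} [Fintype α] (Q : α → Prop) [DecidablePred Q] :
    ∑ a : α, e (Q a) = (Finset.univ.filter Q).card := by
  have := sum_e_mul Q (fun _ => 1)
  simpa using this

lemma sq_expand {α β : Type*} [Fintype α] [Fintype β] (P : α → β → Prop) (x : β → ℝ) :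
    ∑ a : α, (∑ S : β, e (P a S) * x S) ^ 2
      = ∑ S : β, ∑ T : β, x S * x T * ∑ a : α, e (P a S ∧ P a T) := by
  have h1 : ∀ a : α, (∑ S : β, e (P a S) * x S) ^ 2
      = ∑ S : β, ∑ T : β, (e (P a S) * x S) * (e (P a T) * x T) := by
    intro a
    rw [sq, Finset.sum_mul_sum]
  rw [Finset.sum_congr rfl fun a _ => h1 a, Finset.sum_comm]
  refine Finset.sum_congr rfl fun S _ => ?_
  rw [Finset.sum_comm]
  refine Finset.sum_congr rfl fun T _ => ?_
  rw [Finset.mul_sum]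
  exact Finset.sum_congr rfl fun a _ => by rw [← e_mul_e]; ring

lemma quad_identity (hk : 2 ≤ k) (hkn : 2 * k ≤ n) (x : K n (k - 1) → ℝ) :
    ∑ A : K n k, (∑ S : K n (k - 1), e (S.1 ⊆ A.1) * x S) ^ 2
      = ∑ R : K n (k - 2), (∑ S : K n (k - 1), e (R.1 ⊆ S.1) * x S) ^ 2
        + ((n - 2 * k + 2 : ℕ) : ℝ) * ∑ S : K n (k - 1), (x S) ^ 2 := by
  classical
  have hx1 := sq_expand (fun (A : K n k) (S : K n (k - 1)) => S.1 ⊆ A.1) x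
  have hx2 := sq_expand (fun (R : K n (k - 2)) (S : K n (k - 1)) => R.1 ⊆ S.1) x
  rw [hx1, hx2]
  have key : ∀ S T : K n (k - 1),
      x S * x T * ∑ A : K n k, e (S.1 ⊆ A.1 ∧ T.1 ⊆ A.1)
      = x S * x T * ∑ R : K n (k - 2), e (R.1 ⊆ S.1 ∧ R.1 ⊆ T.1)
        + x S * x T * ((n - 2 * k + 2 : ℕ) : ℝ) * (if S = T then 1 else 0) := by
    intro S T
    have hc : ∑ A : K n k, e (S.1 ⊆ A.1 ∧ T.1 ⊆ A.1)
        = ∑ R : K n (k - 2), e (R.1 ⊆ S.1 ∧ R.1 ⊆ T.1)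
          + ((n - 2 * k + 2 : ℕ) : ℝ) * (if S = T then 1 else 0) := by
      rw [sum_e_card, sum_e_card]
      have := count_eq hk hkn S T
      have hcast : (((Finset.univ.filter
            (fun A : K n k => S.1 ⊆ A.1 ∧ T.1 ⊆ A.1)).card : ℕ) : ℝ)
          = (((Finset.univ.filter
              (fun R : K n (k - 2) => R.1 ⊆ S.1 ∧ R.1 ⊆ T.1)).card
            + (n - 2 * k + 2) * (if S = T then 1 else 0) : ℕ) : ℝ) := by
        exact_mod_cast congrArg (Nat.cast (R := ℝ)) this
      rw [hcast]
      push_cast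
      by_cases h : S = T <;> simp [h]
    rw [hc]
    ring
  rw [Finset.sum_congr rfl fun S _ => Finset.sum_congr rfl fun T _ => key S T]
  rw [Finset.sum_congr rfl fun S _ => Finset.sum_add_distrib, Finset.sum_add_distrib]
  congr 1
  rw [Finset.mul_sum]
  refine Finset.sum_congr rfl fun S _ => ?_
  rw [Finset.sum_eq_single S (fun T _ hTS => by rw [if_neg (fun h => hTS h.symm)]; ring)
    (fun h => absurd (Finset.mem_univ S) h), if_pos rfl]
  ring

lemma mulVec_entry_e {l : ℕ} (x : K n l → ℝ) (A : K n k) :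
    (inclMatrix n k l *ᵥ x) A = ∑ S : K n l, e (S.1 ⊆ A.1) * x S := by
  rw [Matrix.mulVec, dotProduct]
  exact Finset.sum_congr rfl fun S _ => by rw [incl_eq_e]

lemma incl_ker_zero (hk : 1 ≤ k) (hkn : k ≤ n / 2) (x : K n (k - 1) → ℝ)
    (hx : inclMatrix n k (k - 1) *ᵥ x = 0) : x = 0 := by
  rcases eq_or_lt_of_le hk with hk1 | hk2
  · -- k = 1
    have hn2 : 2 ≤ n := by omega
    have hone : ∀ S : K n (k - 1), S = ⟨∅, by rw [Finset.card_empty]; omega⟩ := by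
      intro S
      apply Subtype.ext
      have : S.1.card = 0 := by rw [S.2]; omega
      simpa [Finset.card_eq_zero] using this
    have hA : ({⟨0, by omega⟩} : Finset (Fin n)).card = k := by
      rw [Finset.card_singleton]; omega
    have h0 := congrFun hx ⟨{⟨0, by omega⟩}, hA⟩
    rw [mulVec_entry_e, Fintype.sum_eq_single (⟨∅, by rw [Finset.card_empty]; omega⟩ : K n (k - 1))
      (fun S hS => absurd (hone S) hS)] at h0
    rw [e_true _ (Finset.empty_subset _), one_mul] at h0
    funext S
    rw [hone S]
    exact h0
  · -- k ≥ 2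
    have hk2' : 2 ≤ k := hk2
    have hkn' : 2 * k ≤ n := by omega
    have hzero : ∀ A : K n k, ∑ S : K n (k - 1), e (S.1 ⊆ A.1) * x S = 0 := by
      intro A
      rw [← mulVec_entry_e]
      exact congrFun hx A
    have hq := quad_identity hk2' hkn' x
    have hL0 : ∑ A : K n k, (∑ S : K n (k - 1), e (S.1 ⊆ A.1) * x S) ^ 2 = 0 :=
      Finset.sum_eq_zero fun A _ => by rw [hzero A]; norm_num
    rw [hL0] at hq
    have hR : (0 : ℝ) ≤ ∑ R : K n (k - 2), (∑ S : K n (k - 1), e (R.1 ⊆ S.1) * x S) ^ 2 :=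
      Finset.sum_nonneg fun R _ => sq_nonneg _
    have hm : (0 : ℝ) < ((n - 2 * k + 2 : ℕ) : ℝ) := by
      have h0 : 0 < n - 2 * k + 2 := by omega
      exact_mod_cast h0
    have hBnn : (0 : ℝ) ≤ ∑ S : K n (k - 1), (x S) ^ 2 :=
      Finset.sum_nonneg fun S _ => sq_nonneg _
    have hB0 : ∑ S : K n (k - 1), (x S) ^ 2 = 0 := by nlinarith [hq, hR, hm, hBnn]
    funext S
    have hx0 := (Finset.sum_eq_zero_iff_of_nonneg
      (fun S _ => sq_nonneg (x S))).mp hB0 S (Finset.mem_univ S)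
    simpa using pow_eq_zero_iff two_ne_zero |>.mp hx0
  
end Chunk6

/-- If `φ₁, …, φ_N` (`N = C(n,k-1)`) form an eigenbasis of `L_{k-1}(G)` with eigenvalues
`λ₁, …, λ_N`, then `B_{n,k,k-1}φ₁, …, B_{n,k,k-1}φ_N` are linearly independent eigenvectors
of `L_k(G)` with the same respective eigenvalues. -/
theorem incl_eigenbasis (n k : ℕ) (G : SimpleGraph (Fin n)) (hk : 1 ≤ k) (hkn : k ≤ n / 2)
    (φ : Fin (Nat.choose n (k - 1)) → ({s : Finset (Fin n) // s.card = k - 1} → ℝ))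
    (lam : Fin (Nat.choose n (k - 1)) → ℝ)
    (hindep : LinearIndependent ℝ φ)
    (heig : ∀ i, lapTok n (k - 1) G *ᵥ φ i = lam i • φ i) :
    LinearIndependent ℝ (fun i => inclMatrix n k (k - 1) *ᵥ φ i) ∧
      ∀ i, lapTok n k G *ᵥ (inclMatrix n k (k - 1) *ᵥ φ i) =
        lam i • (inclMatrix n k (k - 1) *ᵥ φ i) := by
  constructor
  · have hinj : Function.Injective (Matrix.mulVecLin (inclMatrix n k (k - 1))) := by
      intro x y hxy
      have h0 : inclMatrix n k (k - 1) *ᵥ (x - y) = 0 := by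
        rw [Matrix.mulVec_sub, sub_eq_zero]
        simpa [Matrix.mulVecLin_apply] using hxy
      exact sub_eq_zero.mp (incl_ker_zero hk hkn (x - y) h0)
    have h2 := hindep.map' (Matrix.mulVecLin (inclMatrix n k (k - 1)))
      (LinearMap.ker_eq_bot.mpr hinj)
    have hfun : (fun i => inclMatrix n k (k - 1) *ᵥ φ i)
        = (⇑(Matrix.mulVecLin (inclMatrix n k (k - 1))) ∘ φ) := by
      funext i
      simp [Matrix.mulVecLin_apply]
    rw [hfun]
    exact h2
  · intro i
    rw [Matrix.mulVec_mulVec, comm_mat G, ← Matrix.mulVec_mulVec, heig i, Matrix.mulVec_smul]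
end
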